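/- arXiv:2306.12841 — 3 statements merged into one kernel-verified Lean document; each statement's English description precedes it below -/
import Mathlib

section
/- Under this setup, for every k ≥ 0 with ∑_{l=0}^k γ_l > 0, the iterates satisfy the convergence guarantee 𝔼[min_{0≤l≤k} ‖∇F(θ_l)‖²] ≤ 2(F(θ_0) − F*) / (2 μ_m ∑_{l=0}^k γ_l) + μ_M² C L ∑_{l=0}^k γ_l² / (2 μ_m ∑_{l=0}^k γ_l). (Theorem 1 of the paper: convergence of Fisher-SGD when the latent variables are simulated from the posterior distribution.) -/
set_option maxHeartbeats 2000000

open MeasureTheory Filter Finset intervalIntegral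
open scoped RealInnerProductSpace

section auxLemmas

variable {E : Type*} [NormedAddCommGroup E] [InnerProductSpace ℝ E]

/-- Descent lemma for functions with Lipschitz gradient. -/
private lemma descent_lemma [CompleteSpace E] (F : E → ℝ) (hF : Differentiable ℝ F) {L : ℝ}
    (hL : 0 ≤ L) (hLip : ∀ x y, ‖gradient F x - gradient F y‖ ≤ L * ‖x - y‖) (x v : E) :
    F (x + v) ≤ F x + ⟪gradient F x, v⟫ + L / 2 * ‖v‖ ^ 2 := by
  have hgc : Continuous (gradient F) := by
    refine (LipschitzWith.of_dist_le_mul (K := L.toNNReal) fun a b => ?_).continuous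
    simpa [dist_eq_norm, Real.coe_toNNReal L hL] using hLip a b
  have hderiv : ∀ t : ℝ, HasDerivAt (fun s : ℝ => F (x + s • v))
      ⟪gradient F (x + t • v), v⟫ t := by
    intro t
    have hline : HasDerivAt (fun s : ℝ => x + s • v) v t := by
      simpa using ((hasDerivAt_id t).smul_const v).const_add x
    have hFg : HasFDerivAt F ((InnerProductSpace.toDualMap ℝ E) (gradient F (x + t • v)))
        (x + t • v) := by
      have := (hF (x + t • v)).hasGradientAt
      rwa [hasGradientAt_iff_hasFDerivAt] at this
    simpa [Function.comp_def] using hFg.comp_hasDerivAt t hline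
  have hcont : Continuous fun t : ℝ => ⟪gradient F (x + t • v), v⟫ :=
    ((hgc.comp (by continuity : Continuous fun t : ℝ => x + t • v)).inner continuous_const)
  have hFTC : ∫ t in (0:ℝ)..1, ⟪gradient F (x + t • v), v⟫ = F (x + v) - F x := by
    have := integral_eq_sub_of_hasDerivAt (f := fun s : ℝ => F (x + s • v))
      (fun t _ => hderiv t) (hcont.intervalIntegrable 0 1)
    simpa using this
  have hbound : ∫ t in (0:ℝ)..1, ⟪gradient F (x + t • v), v⟫
      ≤ ∫ t in (0:ℝ)..1, (⟪gradient F x, v⟫ + (L * ‖v‖ ^ 2) * t) := by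
    refine integral_mono_on (by norm_num) (hcont.intervalIntegrable 0 1)
      ((continuous_const.add (continuous_const.mul continuous_id')).intervalIntegrable 0 1) ?_
    intro t ht
    rw [Set.mem_Icc] at ht
    have h1 : ⟪gradient F (x + t • v), v⟫ - ⟪gradient F x, v⟫
        = ⟪gradient F (x + t • v) - gradient F x, v⟫ := by
      rw [inner_sub_left]
    have h2 : ⟪gradient F (x + t • v) - gradient F x, v⟫ ≤ L * t * ‖v‖ ^ 2 := by
      refine (real_inner_le_norm _ _).trans ?_
      have := hLip (x + t • v) x
      simp only [add_sub_cancel_left] at this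
      have hn : ‖t • v‖ = t * ‖v‖ := by
        rw [norm_smul, Real.norm_eq_abs, abs_of_nonneg ht.1]
      calc ‖gradient F (x + t • v) - gradient F x‖ * ‖v‖
          ≤ (L * ‖t • v‖) * ‖v‖ := by
            exact mul_le_mul_of_nonneg_right this (norm_nonneg v)
        _ = L * t * ‖v‖ ^ 2 := by rw [hn]; ring
    nlinarith [h2]
  have hint : ∫ t in (0:ℝ)..1, (⟪gradient F x, v⟫ + (L * ‖v‖ ^ 2) * t)
      = ⟪gradient F x, v⟫ + L / 2 * ‖v‖ ^ 2 := by
    rw [intervalIntegral.integral_add (f := fun _ => ⟪gradient F x, v⟫)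
      (g := fun t => L * ‖v‖ ^ 2 * t) (intervalIntegrable_const)
      ((by fun_prop : Continuous fun t : ℝ => L * ‖v‖ ^ 2 * t).intervalIntegrable 0 1),
      intervalIntegral.integral_const, intervalIntegral.integral_const_mul, integral_id]
    norm_num
    ring
  linarith [hFTC ▸ hbound, hint ▸ hbound]

private lemma selfadjoint_inner_swap [CompleteSpace E] {A : E →L[ℝ] E} (hA : IsSelfAdjoint A)
    (u w : E) : ⟪A u, w⟫ = ⟪u, A w⟫ := by
  conv_lhs => rw [← ContinuousLinearMap.isSelfAdjoint_iff'.mp hA]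
  exact ContinuousLinearMap.adjoint_inner_left A w u

private lemma opnorm_bound_of_quadratic_bounds [CompleteSpace E] {A : E →L[ℝ] E}
    (hA : IsSelfAdjoint A) {c : ℝ} (hc : 0 ≤ c)
    (h0 : ∀ v, 0 ≤ ⟪v, A v⟫) (hub : ∀ v, ⟪v, A v⟫ ≤ c * ‖v‖ ^ 2) (v : E) :
    ‖A v‖ ≤ c * ‖v‖ := by
  set u := A v with hu
  have hquad : ∀ t : ℝ, 0 ≤ ⟪v, A v⟫ * (t * t) + (2 * ‖A v‖ ^ 2) * t + ⟪u, A u⟫ := by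
    intro t
    have h := h0 (u + t • v)
    have hexp : ⟪u + t • v, A (u + t • v)⟫
        = ⟪v, A v⟫ * (t * t) + (2 * ‖A v‖ ^ 2) * t + ⟪u, A u⟫ := by
      rw [map_add, _root_.map_smul, inner_add_left, inner_add_right, inner_add_right,
        real_inner_smul_left, real_inner_smul_left, real_inner_smul_right,
        real_inner_smul_right]
      have h1 : ⟪u, A v⟫ = ‖A v‖ ^ 2 := by rw [hu, real_inner_self_eq_norm_sq]
      have h2 : ⟪v, A u⟫ = ‖A v‖ ^ 2 := by
        rw [← selfadjoint_inner_swap hA, hu, real_inner_self_eq_norm_sq]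
      rw [h1, h2]; ring
    linarith [hexp ▸ h]
  have hdisc := discrim_le_zero (a := ⟪v, A v⟫) (b := 2 * ‖A v‖ ^ 2) (c := ⟪u, A u⟫)
    (fun t => by linarith [hquad t])
  rw [discrim] at hdisc
  have hqa := hub v
  have hqc := hub u
  have h4 : ‖A v‖ ^ 2 * ‖A v‖ ^ 2 ≤ (c * ‖v‖ ^ 2) * (c * ‖u‖ ^ 2) := by
    nlinarith [h0 v, h0 u, sq_nonneg ‖A v‖]
  have hsq : ‖A v‖ ^ 2 ≤ (c * ‖v‖) ^ 2 := by
    rcases eq_or_lt_of_le (norm_nonneg (A v)) with h | h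
    · rw [← h]
      simpa using sq_nonneg (c * ‖v‖)
    · have : ‖u‖ ^ 2 = ‖A v‖ ^ 2 := by rw [hu]
      nlinarith [this ▸ h4]
  calc ‖A v‖ = √(‖A v‖ ^ 2) := by rw [Real.sqrt_sq (norm_nonneg _)]
    _ ≤ √((c * ‖v‖) ^ 2) := Real.sqrt_le_sqrt hsq
    _ = c * ‖v‖ := Real.sqrt_sq (by positivity)

private lemma condExp_comp_clm {α : Type*} {m m0 : MeasurableSpace α} {μ : Measure α}
    (hm : m ≤ m0) [SigmaFinite (μ.trim hm)] {E F : Type*} [NormedAddCommGroup E]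
    [NormedSpace ℝ E] [CompleteSpace E] [NormedAddCommGroup F] [NormedSpace ℝ F]
    [CompleteSpace F] (T : E →L[ℝ] F) {f : α → E} (hf : Integrable f μ) :
    (fun ω => T ((μ[f|m]) ω)) =ᵐ[μ] μ[fun ω => T (f ω)|m] := by
  refine ae_eq_condExp_of_forall_setIntegral_eq hm (T.integrable_comp hf)
    (fun s _ _ => (T.integrable_comp integrable_condExp).integrableOn)
    (fun s hs _ => ?_) ?_
  · rw [T.integral_comp_comm integrable_condExp.integrableOn,
      setIntegral_condExp hm hf hs, T.integral_comp_comm hf.integrableOn]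
  · exact ((T.continuous.comp_stronglyMeasurable stronglyMeasurable_condExp)).aestronglyMeasurable

private lemma measurable_inf'_range {α : Type*} {m : MeasurableSpace α} (k : ℕ) (g : ℕ → α → ℝ)
    (hg : ∀ l, Measurable (g l)) :
    Measurable fun ω => (range (k+1)).inf' nonempty_range_add_one fun l => g l ω := by
  induction k with
  | zero => simpa using hg 0
  | succ n ih =>
      have he : ∀ ω, ((range (n+2)).inf' nonempty_range_add_one fun l => g l ω)
          = min (g (n+1) ω) ((range (n+1)).inf' nonempty_range_add_one fun l => g l ω) := by
        intro ω
        have hne : (insert (n+1) (range (n+1))).Nonempty := insert_nonempty _ _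
        have e1 : ((range (n+2)).inf' nonempty_range_add_one fun l => g l ω)
            = ((insert (n+1) (range (n+1))).inf' hne fun l => g l ω) :=
          Finset.inf'_congr nonempty_range_add_one (by rw [range_add_one]) (fun _ _ => rfl)
        rw [e1, inf'_insert (H := nonempty_range_add_one)]
      simp_rw [he]
      exact (hg (n+1)).min ih

private lemma abs_coord_le_norm {d : ℕ} (x : EuclideanSpace ℝ (Fin d)) (i : Fin d) :
    |x i| ≤ ‖x‖ := by
  rw [EuclideanSpace.norm_eq]
  calc |x i| = √(‖x i‖ ^ 2) := by rw [Real.sqrt_sq_eq_abs, Real.norm_eq_abs, abs_abs]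
    _ ≤ √(∑ j, ‖x j‖ ^ 2) := by
        refine Real.sqrt_le_sqrt (Finset.single_le_sum (f := fun j => ‖x j‖ ^ 2)
          (fun j _ => by positivity) (mem_univ i))

end auxLemmas

/-- **Theorem 1** (Fisher-SGD, posterior sampling case): under regularity assumptions on the
objective `F`, eigenvalue bounds on the preconditioners and a conditional second-moment bound
on the stochastic gradients, the iterates satisfy the stated convergence guarantee. -/
theorem fisher_sgd_posterior_convergence
    {d : ℕ} (hd : 1 ≤ d)
    {Ω : Type*} {m0 : MeasurableSpace Ω} {μ : Measure Ω} [IsProbabilityMeasure μ]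
    (𝔉 : Filtration ℕ m0)
    (F : EuclideanSpace ℝ (Fin d) → ℝ) (Fstar : ℝ)
    (hFdiff : Differentiable ℝ F)
    (hFstar : IsGLB (Set.range F) Fstar)
    (L : ℝ) (hL : 0 < L)
    (hLip : ∀ x y : EuclideanSpace ℝ (Fin d),
      ‖gradient F x - gradient F y‖ ≤ L * ‖x - y‖)
    (γ : ℕ → ℝ) (hγ0 : ∀ k, 0 ≤ γ k) (hγ1 : ∀ k, γ k ≤ 1)
    (μm μM C : ℝ) (hμm : 0 < μm) (hμmM : μm ≤ μM) (hC : 0 < C)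
    (θ : ℕ → Ω → EuclideanSpace ℝ (Fin d))
    (θ₀ : EuclideanSpace ℝ (Fin d)) (hθ0 : ∀ ω, θ 0 ω = θ₀)
    (P : ℕ → Ω → (EuclideanSpace ℝ (Fin d) →L[ℝ] EuclideanSpace ℝ (Fin d)))
    (H : ℕ → Ω → EuclideanSpace ℝ (Fin d))
    (hθmeas : ∀ k, Measurable[𝔉 k] (θ k))
    (hPmeas : ∀ k, Measurable[𝔉 k] (P k))
    -- `P k ω` is symmetric positive definite with all eigenvalues in `[μm, μM]`
    (hPsa : ∀ k ω, IsSelfAdjoint (P k ω))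
    (hPlb : ∀ k ω (v : EuclideanSpace ℝ (Fin d)), μm * ‖v‖ ^ 2 ≤ ⟪v, P k ω v⟫)
    (hPub : ∀ k ω (v : EuclideanSpace ℝ (Fin d)), ⟪v, P k ω v⟫ ≤ μM * ‖v‖ ^ 2)
    (hHmeas : ∀ k, Measurable[𝔉 (k + 1)] (H k))
    (hHint : ∀ k, Integrable (H k) μ)
    (hHcond : ∀ k, μ[H k | 𝔉 k] =ᵐ[μ] fun ω => gradient F (θ k ω))
    (hHsqint : ∀ k, Integrable (fun ω => ‖H k ω‖ ^ 2) μ)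
    (hHsq : ∀ k, ∀ᵐ ω ∂μ, (μ[fun ω' => ‖H k ω'‖ ^ 2 | 𝔉 k]) ω ≤ C)
    (hrec : ∀ k ω, θ (k + 1) ω = θ k ω - γ k • P k ω (H k ω))
    (hFint : ∀ k, Integrable (fun ω => F (θ k ω)) μ)
    (k : ℕ) (hsum : 0 < ∑ l ∈ range (k + 1), γ l) :
    ∫ ω, ((range (k + 1)).inf' nonempty_range_add_one
        fun l => ‖gradient F (θ l ω)‖ ^ 2) ∂μ
      ≤ 2 * (F θ₀ - Fstar) / (2 * μm * ∑ l ∈ range (k + 1), γ l)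
        + μM ^ 2 * C * L * (∑ l ∈ range (k + 1), γ l ^ 2)
          / (2 * μm * ∑ l ∈ range (k + 1), γ l) := by
  have hm : ∀ l, 𝔉 l ≤ m0 := fun l => 𝔉.le l
  have hL0 : (0:ℝ) ≤ L := hL.le
  have hμMpos : (0:ℝ) < μM := lt_of_lt_of_le hμm hμmM
  -- continuity and measurability of the gradient
  have hgc : Continuous (gradient F) := by
    refine (LipschitzWith.of_dist_le_mul (K := L.toNNReal) fun a b => ?_).continuous
    simpa [dist_eq_norm, Real.coe_toNNReal L hL0] using hLip a b
  have hGmeas : ∀ l, Measurable[𝔉 l] fun ω => gradient F (θ l ω) := fun l =>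
    hgc.measurable.comp (hθmeas l)
  have hGmeas0 : ∀ l, Measurable fun ω => gradient F (θ l ω) := fun l =>
    (hGmeas l).mono (hm l) le_rfl
  set c₀ : ℝ := (1 + C) / 2 with hc₀def
  have hc₀ : 0 ≤ c₀ := by rw [hc₀def]; positivity
  set B : ℝ := Real.sqrt d * c₀ with hBdef
  have hB0 : 0 ≤ B := by rw [hBdef]; positivity
  -- coordinate integrability
  have hHi_int : ∀ l (i : Fin d), Integrable (fun ω => H l ω i) μ := fun l i =>
    (EuclideanSpace.proj (𝕜 := ℝ) i).integrable_comp (hHint l)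
  -- a.e. identification of the coordinates of the conditional expectation
  have hGi : ∀ l (i : Fin d),
      (μ[fun ω => H l ω i|𝔉 l]) =ᵐ[μ] fun ω => gradient F (θ l ω) i := by
    intro l i
    have h1 := (condExp_comp_clm (hm l) (EuclideanSpace.proj (𝕜 := ℝ) i) (hHint l)).symm
    have h2 : (fun ω => EuclideanSpace.proj (𝕜 := ℝ) i ((μ[H l|𝔉 l]) ω)) =ᵐ[μ]
        fun ω => gradient F (θ l ω) i := by
      filter_upwards [hHcond l] with ω hω
      simp only [hω]
      rfl
    exact h1.trans h2
  -- conditional second-moment bound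
  have hgb : ∀ l, (μ[fun ω => (1 + ‖H l ω‖ ^ 2) / 2|𝔉 l]) ≤ᵐ[μ] fun _ => c₀ := by
    intro l
    have e1 : (fun ω => (1 + ‖H l ω‖ ^ 2) / 2)
        = (2⁻¹ : ℝ) • ((fun _ => (1:ℝ)) + fun ω => ‖H l ω‖ ^ 2) := by
      funext ω
      simp only [Pi.smul_apply, Pi.add_apply, smul_eq_mul]
      ring
    have e2 := condExp_smul (m := 𝔉 l) (μ := μ) (2⁻¹ : ℝ)
      ((fun _ => (1:ℝ)) + fun ω => ‖H l ω‖ ^ 2)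
    have e3 := condExp_add (m := 𝔉 l) (μ := μ) (integrable_const (1:ℝ)) (hHsqint l)
    have e4 := condExp_const (hm l) (1:ℝ) (μ := μ)
    rw [e1]
    filter_upwards [e2, e3, hHsq l] with ω h2 h3 h4
    have h2' : (μ[(2⁻¹:ℝ) • ((fun _ => (1:ℝ)) + fun ω => ‖H l ω‖ ^ 2)|𝔉 l]) ω
        = 2⁻¹ * ((μ[(fun _ => (1:ℝ)) + fun ω => ‖H l ω‖ ^ 2|𝔉 l]) ω) := by
      rw [h2]; simp
    have h3' : (μ[(fun _ => (1:ℝ)) + fun ω => ‖H l ω‖ ^ 2|𝔉 l]) ω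
        = (μ[fun _ => (1:ℝ)|𝔉 l]) ω + (μ[fun ω => ‖H l ω‖ ^ 2|𝔉 l]) ω := by
      rw [h3]; simp
    have h4' : (μ[fun _ => (1:ℝ)|𝔉 l]) ω = 1 := by rw [e4]
    rw [h2', h3', h4']
    rw [hc₀def]
    linarith
  -- a.e. coordinate bound on the gradient
  have habs : ∀ l (i : Fin d), ∀ᵐ ω ∂μ, |gradient F (θ l ω) i| ≤ c₀ := by
    intro l i
    have hgint : Integrable (fun ω => (1 + ‖H l ω‖ ^ 2) / 2) μ :=
      ((integrable_const (1:ℝ)).add (hHsqint l)).div_const 2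
    have hub : (fun ω => H l ω i) ≤ᵐ[μ] fun ω => (1 + ‖H l ω‖ ^ 2) / 2 := by
      refine ae_of_all _ fun ω => ?_
      have h1 : H l ω i ≤ ‖H l ω‖ := (le_abs_self _).trans (abs_coord_le_norm (H l ω) i)
      nlinarith [sq_nonneg (‖H l ω‖ - 1)]
    have hub' : (-(fun ω => H l ω i)) ≤ᵐ[μ] fun ω => (1 + ‖H l ω‖ ^ 2) / 2 := by
      refine ae_of_all _ fun ω => ?_
      have h1 : -(H l ω i) ≤ ‖H l ω‖ := (neg_le_abs _).trans (abs_coord_le_norm (H l ω) i)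
      simp only [Pi.neg_apply]
      nlinarith [sq_nonneg (‖H l ω‖ - 1)]
    have m1 := condExp_mono (m := 𝔉 l) (hHi_int l i) hgint hub
    have m2 := condExp_mono (m := 𝔉 l) (hHi_int l i).neg hgint hub'
    have m3 := condExp_neg (m := 𝔉 l) (μ := μ) (fun ω => H l ω i)
    filter_upwards [hGi l i, m1, m2, m3, hgb l] with ω h0 h1 h2 h3 h4
    rw [← h0]
    rw [abs_le]
    constructor
    · have : (μ[-(fun ω => H l ω i)|𝔉 l]) ω = -((μ[fun ω => H l ω i|𝔉 l]) ω) := by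
        rw [h3]; simp
      rw [this] at h2
      linarith
    · linarith
  -- a.e. norm bound on the gradient
  have hGb : ∀ l, ∀ᵐ ω ∂μ, ‖gradient F (θ l ω)‖ ≤ B := by
    intro l
    filter_upwards [ae_all_iff.mpr (habs l)] with ω hω
    rw [hBdef, EuclideanSpace.norm_eq]
    have hsum2 : ∑ j, ‖gradient F (θ l ω) j‖ ^ 2 ≤ (d : ℝ) * c₀ ^ 2 := by
      calc ∑ j, ‖gradient F (θ l ω) j‖ ^ 2 ≤ ∑ _j : Fin d, c₀ ^ 2 := by
            refine Finset.sum_le_sum fun j _ => ?_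
            have := hω j
            rw [Real.norm_eq_abs]
            nlinarith [abs_nonneg (gradient F (θ l ω) j)]
        _ = (d : ℝ) * c₀ ^ 2 := by simp [mul_comm]
    calc √(∑ j, ‖gradient F (θ l ω) j‖ ^ 2) ≤ √((d : ℝ) * c₀ ^ 2) := Real.sqrt_le_sqrt hsum2
      _ = √(d : ℝ) * c₀ := by
          rw [Real.sqrt_mul (by positivity), Real.sqrt_sq hc₀]
  -- operator norm bound
  have hPop : ∀ l ω v, ‖P l ω v‖ ≤ μM * ‖v‖ := fun l ω v =>
    opnorm_bound_of_quadratic_bounds (hPsa l ω) hμMpos.le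
      (fun w => le_trans (mul_nonneg hμm.le (by positivity)) (hPlb l ω w)) (hPub l ω) v
  -- measurability facts
  have hPGmeas : ∀ l, Measurable[𝔉 l] fun ω => P l ω (gradient F (θ l ω)) := fun l =>
    isBoundedBilinearMap_apply.continuous.measurable.comp ((hPmeas l).prodMk (hGmeas l))
  have hPHmeas : ∀ l, Measurable fun ω => P l ω (H l ω) := fun l =>
    isBoundedBilinearMap_apply.continuous.measurable.comp
      (((hPmeas l).mono (hm l) le_rfl).prodMk ((hHmeas l).mono (hm (l+1)) le_rfl))
  have hPGb : ∀ l, ∀ᵐ ω ∂μ, ‖P l ω (gradient F (θ l ω))‖ ≤ μM * B := by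
    intro l
    filter_upwards [hGb l] with ω h
    exact (hPop l ω _).trans (mul_le_mul_of_nonneg_left h hμMpos.le)
  -- integrability facts
  have hIH : ∀ l, Integrable (fun ω => ⟪gradient F (θ l ω), P l ω (H l ω)⟫) μ := by
    intro l
    refine Integrable.mono' ((hHint l).norm.const_mul (B * μM))
      (((hGmeas0 l).inner (hPHmeas l)).aestronglyMeasurable) ?_
    filter_upwards [hGb l] with ω h
    rw [Real.norm_eq_abs]
    calc |⟪gradient F (θ l ω), P l ω (H l ω)⟫| ≤ ‖gradient F (θ l ω)‖ * ‖P l ω (H l ω)‖ :=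
          abs_real_inner_le_norm _ _
      _ ≤ B * (μM * ‖H l ω‖) := mul_le_mul h (hPop l ω _) (norm_nonneg _) hB0
      _ = B * μM * ‖H l ω‖ := by ring
  have hIPG : ∀ l, Integrable (fun ω => ⟪gradient F (θ l ω), P l ω (gradient F (θ l ω))⟫) μ := by
    intro l
    refine Integrable.mono' (integrable_const (B * (μM * B)))
      (((hGmeas0 l).inner ((hPGmeas l).mono (hm l) le_rfl)).aestronglyMeasurable) ?_
    filter_upwards [hGb l] with ω h
    rw [Real.norm_eq_abs]
    calc |⟪gradient F (θ l ω), P l ω (gradient F (θ l ω))⟫|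
        ≤ ‖gradient F (θ l ω)‖ * ‖P l ω (gradient F (θ l ω))‖ := abs_real_inner_le_norm _ _
      _ ≤ B * (μM * B) := by
          refine mul_le_mul h ((hPop l ω _).trans ?_) (norm_nonneg _) hB0
          exact mul_le_mul_of_nonneg_left h hμMpos.le
  have hIPH2 : ∀ l, Integrable (fun ω => ‖P l ω (H l ω)‖ ^ 2) μ := by
    intro l
    refine Integrable.mono' ((hHsqint l).const_mul (μM ^ 2))
      (((hPHmeas l).norm.pow_const 2).aestronglyMeasurable) (ae_of_all _ fun ω => ?_)
    rw [Real.norm_eq_abs, abs_of_nonneg (by positivity)]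
    nlinarith [hPop l ω (H l ω), norm_nonneg (P l ω (H l ω)), norm_nonneg (H l ω), hμMpos.le]
  have hIG2 : ∀ l, Integrable (fun ω => ‖gradient F (θ l ω)‖ ^ 2) μ := by
    intro l
    refine Integrable.mono' (integrable_const (B ^ 2))
      (((hGmeas0 l).norm.pow_const 2).aestronglyMeasurable) ?_
    filter_upwards [hGb l] with ω h
    rw [Real.norm_eq_abs, abs_of_nonneg (by positivity)]
    nlinarith [norm_nonneg (gradient F (θ l ω))]
  -- second moment of H
  have hEH2 : ∀ l, ∫ ω, ‖H l ω‖ ^ 2 ∂μ ≤ C := by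
    intro l
    calc ∫ ω, ‖H l ω‖ ^ 2 ∂μ = ∫ ω, (μ[fun ω' => ‖H l ω'‖ ^ 2|𝔉 l]) ω ∂μ :=
          (integral_condExp (hm l)).symm
      _ ≤ ∫ _ω, C ∂μ := integral_mono_ae integrable_condExp (integrable_const C) (hHsq l)
      _ = C := by simp
  -- the key conditional-expectation step
  have hkey : ∀ l, ∫ ω, ⟪gradient F (θ l ω), P l ω (H l ω)⟫ ∂μ
      = ∫ ω, ⟪gradient F (θ l ω), P l ω (gradient F (θ l ω))⟫ ∂μ := by
    intro l
    have hswapH : ∀ ω, ⟪gradient F (θ l ω), P l ω (H l ω)⟫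
        = ⟪P l ω (gradient F (θ l ω)), H l ω⟫ := fun ω =>
      (selfadjoint_inner_swap (hPsa l ω) (gradient F (θ l ω)) (H l ω)).symm
    have hswapG : ∀ ω, ⟪gradient F (θ l ω), P l ω (gradient F (θ l ω))⟫
        = ⟪P l ω (gradient F (θ l ω)), gradient F (θ l ω)⟫ := fun ω =>
      (selfadjoint_inner_swap (hPsa l ω) (gradient F (θ l ω)) (gradient F (θ l ω))).symm
    have hinner : ∀ a b : EuclideanSpace ℝ (Fin d), ⟪a, b⟫ = ∑ i, a i * b i := fun a b => by
      simp [PiLp.inner_apply, RCLike.inner_apply, conj_trivial, mul_comm]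
    have hfi_meas : ∀ i : Fin d, Measurable[𝔉 l] fun ω => P l ω (gradient F (θ l ω)) i :=
      fun i => (EuclideanSpace.proj (𝕜 := ℝ) i).measurable.comp (hPGmeas l)
    have hfib : ∀ᵐ ω ∂μ, ∀ i : Fin d, |P l ω (gradient F (θ l ω)) i| ≤ μM * B := by
      filter_upwards [hPGb l] with ω h i
      exact (abs_coord_le_norm (P l ω (gradient F (θ l ω))) i).trans h
    have hGi_int : ∀ i : Fin d, Integrable (fun ω => gradient F (θ l ω) i) μ := by
      intro i
      refine Integrable.mono' (integrable_const B)
        (((EuclideanSpace.proj (𝕜 := ℝ) i).measurable.comp (hGmeas0 l)).aestronglyMeasurable) ?_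
      filter_upwards [hGb l] with ω h
      rw [Real.norm_eq_abs]
      exact (abs_coord_le_norm (gradient F (θ l ω)) i).trans h
    have hintH : ∀ i : Fin d, Integrable (fun ω => P l ω (gradient F (θ l ω)) i * H l ω i) μ := by
      intro i
      refine Integrable.bdd_mul (c := μM * B) (hHi_int l i)
        (((hfi_meas i).mono (hm l) le_rfl).aestronglyMeasurable) ?_
      filter_upwards [hfib] with ω h
      rw [Real.norm_eq_abs]
      exact h i
    have hintG : ∀ i : Fin d,
        Integrable (fun ω => P l ω (gradient F (θ l ω)) i * gradient F (θ l ω) i) μ := by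
      intro i
      refine Integrable.bdd_mul (c := μM * B) (hGi_int i)
        (((hfi_meas i).mono (hm l) le_rfl).aestronglyMeasurable) ?_
      filter_upwards [hfib] with ω h
      rw [Real.norm_eq_abs]
      exact h i
    have hterm : ∀ i : Fin d, ∫ ω, P l ω (gradient F (θ l ω)) i * H l ω i ∂μ
        = ∫ ω, P l ω (gradient F (θ l ω)) i * gradient F (θ l ω) i ∂μ := by
      intro i
      have hmul := condExp_stronglyMeasurable_mul_of_bound (hm l)
        (Measurable.stronglyMeasurable (hfi_meas i)) (hHi_int l i) (μM * B)
        (by filter_upwards [hfib] with ω h; rw [Real.norm_eq_abs]; exact h i)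
      calc ∫ ω, P l ω (gradient F (θ l ω)) i * H l ω i ∂μ
          = ∫ ω, (μ[(fun ω' => P l ω' (gradient F (θ l ω')) i) * (fun ω' => H l ω' i)|𝔉 l]) ω ∂μ :=
            (integral_condExp (hm l)).symm
        _ = ∫ ω, ((fun ω' => P l ω' (gradient F (θ l ω')) i)
              * (μ[fun ω' => H l ω' i|𝔉 l])) ω ∂μ := integral_congr_ae hmul
        _ = ∫ ω, P l ω (gradient F (θ l ω)) i * gradient F (θ l ω) i ∂μ := by
            refine integral_congr_ae ?_
            filter_upwards [hGi l i] with ω h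
            simp only [Pi.mul_apply, h]
    calc ∫ ω, ⟪gradient F (θ l ω), P l ω (H l ω)⟫ ∂μ
        = ∫ ω, ∑ i, P l ω (gradient F (θ l ω)) i * H l ω i ∂μ := by
          refine integral_congr_ae (ae_of_all _ fun ω => ?_)
          show ⟪gradient F (θ l ω), P l ω (H l ω)⟫ = ∑ i, P l ω (gradient F (θ l ω)) i * H l ω i
          rw [hswapH ω, hinner]
      _ = ∑ i, ∫ ω, P l ω (gradient F (θ l ω)) i * H l ω i ∂μ :=
          integral_finset_sum _ (fun i _ => hintH i)
      _ = ∑ i, ∫ ω, P l ω (gradient F (θ l ω)) i * gradient F (θ l ω) i ∂μ :=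
          Finset.sum_congr rfl fun i _ => hterm i
      _ = ∫ ω, ∑ i, P l ω (gradient F (θ l ω)) i * gradient F (θ l ω) i ∂μ :=
          (integral_finset_sum _ (fun i _ => hintG i)).symm
      _ = ∫ ω, ⟪gradient F (θ l ω), P l ω (gradient F (θ l ω))⟫ ∂μ := by
          refine integral_congr_ae (ae_of_all _ fun ω => ?_)
          show ∑ i, P l ω (gradient F (θ l ω)) i * gradient F (θ l ω) i
            = ⟪gradient F (θ l ω), P l ω (gradient F (θ l ω))⟫
          rw [hswapG ω, hinner]
  -- one-step expected descent
  have hstep : ∀ l, ∫ ω, F (θ (l+1) ω) ∂μ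
      ≤ ∫ ω, F (θ l ω) ∂μ - γ l * (μm * ∫ ω, ‖gradient F (θ l ω)‖ ^ 2 ∂μ)
        + L / 2 * γ l ^ 2 * (μM ^ 2 * C) := by
    intro l
    have hptw : ∀ ω, F (θ (l+1) ω) ≤ F (θ l ω) - γ l * ⟪gradient F (θ l ω), P l ω (H l ω)⟫
        + L / 2 * (γ l ^ 2 * ‖P l ω (H l ω)‖ ^ 2) := by
      intro ω
      have hd := descent_lemma F hFdiff hL0 hLip (θ l ω) (-(γ l • P l ω (H l ω)))
      have e1 : θ l ω + -(γ l • P l ω (H l ω)) = θ (l+1) ω := by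
        rw [hrec l ω, sub_eq_add_neg]
      rw [e1] at hd
      refine hd.trans (le_of_eq ?_)
      rw [inner_neg_right, real_inner_smul_right, norm_neg, norm_smul,
        Real.norm_eq_abs, abs_of_nonneg (hγ0 l)]
      ring
    have hI1 : Integrable (fun ω => F (θ l ω)
        - γ l * ⟪gradient F (θ l ω), P l ω (H l ω)⟫) μ :=
      (hFint l).sub ((hIH l).const_mul (γ l))
    have hI2 : Integrable (fun ω => L / 2 * (γ l ^ 2 * ‖P l ω (H l ω)‖ ^ 2)) μ :=
      (((hIPH2 l).const_mul (γ l ^ 2)).const_mul (L / 2))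
    have h1 : ∫ ω, F (θ (l+1) ω) ∂μ ≤ ∫ ω, (F (θ l ω)
        - γ l * ⟪gradient F (θ l ω), P l ω (H l ω)⟫
        + L / 2 * (γ l ^ 2 * ‖P l ω (H l ω)‖ ^ 2)) ∂μ :=
      integral_mono_ae (hFint (l+1)) (hI1.add hI2) (ae_of_all _ hptw)
    have e1 : ∫ ω, (F (θ l ω) - γ l * ⟪gradient F (θ l ω), P l ω (H l ω)⟫
          + L / 2 * (γ l ^ 2 * ‖P l ω (H l ω)‖ ^ 2)) ∂μ
        = ∫ ω, (F (θ l ω) - γ l * ⟪gradient F (θ l ω), P l ω (H l ω)⟫) ∂μ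
          + ∫ ω, L / 2 * (γ l ^ 2 * ‖P l ω (H l ω)‖ ^ 2) ∂μ := integral_add hI1 hI2
    have e2 : ∫ ω, (F (θ l ω) - γ l * ⟪gradient F (θ l ω), P l ω (H l ω)⟫) ∂μ
        = ∫ ω, F (θ l ω) ∂μ - ∫ ω, γ l * ⟪gradient F (θ l ω), P l ω (H l ω)⟫ ∂μ :=
      integral_sub (hFint l) ((hIH l).const_mul (γ l))
    have e3 : ∫ ω, γ l * ⟪gradient F (θ l ω), P l ω (H l ω)⟫ ∂μ
        = γ l * ∫ ω, ⟪gradient F (θ l ω), P l ω (H l ω)⟫ ∂μ := MeasureTheory.integral_const_mul _ _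
    have e4 : ∫ ω, L / 2 * (γ l ^ 2 * ‖P l ω (H l ω)‖ ^ 2) ∂μ
        = L / 2 * (γ l ^ 2 * ∫ ω, ‖P l ω (H l ω)‖ ^ 2 ∂μ) := by
      rw [MeasureTheory.integral_const_mul, MeasureTheory.integral_const_mul]
    rw [e1, e2, e3, e4] at h1
    have h2 : μm * ∫ ω, ‖gradient F (θ l ω)‖ ^ 2 ∂μ
        ≤ ∫ ω, ⟪gradient F (θ l ω), P l ω (H l ω)⟫ ∂μ := by
      rw [hkey l, ← MeasureTheory.integral_const_mul]
      exact integral_mono_ae ((hIG2 l).const_mul μm) (hIPG l)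
        (ae_of_all _ fun ω => hPlb l ω _)
    have h3 : ∫ ω, ‖P l ω (H l ω)‖ ^ 2 ∂μ ≤ μM ^ 2 * C := by
      have h31 : ∫ ω, ‖P l ω (H l ω)‖ ^ 2 ∂μ ≤ ∫ ω, μM ^ 2 * ‖H l ω‖ ^ 2 ∂μ := by
        refine integral_mono_ae (hIPH2 l) ((hHsqint l).const_mul _) (ae_of_all _ fun ω => ?_)
        show ‖P l ω (H l ω)‖ ^ 2 ≤ μM ^ 2 * ‖H l ω‖ ^ 2
        nlinarith [hPop l ω (H l ω), norm_nonneg (P l ω (H l ω)), norm_nonneg (H l ω),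
          hμMpos.le]
      rw [MeasureTheory.integral_const_mul] at h31
      exact h31.trans (mul_le_mul_of_nonneg_left (hEH2 l) (by positivity))
    have hγnn : 0 ≤ γ l := hγ0 l
    have hc2 : (0:ℝ) ≤ L / 2 * γ l ^ 2 := by positivity
    nlinarith [mul_le_mul_of_nonneg_left h2 hγnn, mul_le_mul_of_nonneg_left h3 hc2]
  -- telescoping
  have htel : ∀ n : ℕ, ∫ ω, F (θ (n+1) ω) ∂μ
      + μm * ∑ l ∈ range (n+1), γ l * ∫ ω, ‖gradient F (θ l ω)‖ ^ 2 ∂μ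
      ≤ F θ₀ + L / 2 * (μM ^ 2 * C) * ∑ l ∈ range (n+1), γ l ^ 2 := by
    intro n
    induction n with
    | zero =>
      have h0 : ∫ ω, F (θ 0 ω) ∂μ = F θ₀ := by simp [hθ0]
      have hs := hstep 0
      rw [h0] at hs
      simp only [zero_add, range_one, sum_singleton]
      nlinarith [hs]
    | succ n ih =>
      have hs := hstep (n+1)
      rw [sum_range_succ (f := fun l => γ l * ∫ ω, ‖gradient F (θ l ω)‖ ^ 2 ∂μ),
        sum_range_succ (f := fun l => γ l ^ 2)]
      nlinarith [hs, ih]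
  -- lower bound via the infimum of F
  have hFstar_le : ∀ x, Fstar ≤ F x := fun x => hFstar.1 ⟨x, rfl⟩
  have hFs : Fstar ≤ ∫ ω, F (θ (k+1) ω) ∂μ := by
    have h := integral_mono_ae (integrable_const Fstar) (hFint (k+1))
      (ae_of_all _ fun ω => hFstar_le _)
    simpa using h
  have hmain : μm * ∑ l ∈ range (k+1), γ l * ∫ ω, ‖gradient F (θ l ω)‖ ^ 2 ∂μ
      ≤ (F θ₀ - Fstar) + L / 2 * (μM ^ 2 * C) * ∑ l ∈ range (k+1), γ l ^ 2 := by
    linarith [htel k, hFs]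
  -- the minimum over iterates
  have hinf_meas : Measurable fun ω => (range (k + 1)).inf' nonempty_range_add_one
      fun l => ‖gradient F (θ l ω)‖ ^ 2 :=
    measurable_inf'_range k _ (fun l => (hGmeas0 l).norm.pow_const 2)
  have hinf_int : Integrable (fun ω => (range (k + 1)).inf' nonempty_range_add_one
      fun l => ‖gradient F (θ l ω)‖ ^ 2) μ := by
    refine Integrable.mono' (integrable_const (B ^ 2)) hinf_meas.aestronglyMeasurable ?_
    filter_upwards [hGb 0] with ω h
    rw [Real.norm_eq_abs, abs_of_nonneg (le_inf' _ _ fun b _ => by positivity)]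
    refine (inf'_le _ (mem_range.mpr (Nat.succ_pos k))).trans ?_
    nlinarith [norm_nonneg (gradient F (θ 0 ω))]
  have hMle : ∀ l ∈ range (k+1), ∫ ω, ((range (k + 1)).inf' nonempty_range_add_one
      fun l' => ‖gradient F (θ l' ω)‖ ^ 2) ∂μ ≤ ∫ ω, ‖gradient F (θ l ω)‖ ^ 2 ∂μ :=
    fun l hl => integral_mono_ae hinf_int (hIG2 l) (ae_of_all _ fun ω => inf'_le _ hl)
  have hfin : (∑ l ∈ range (k+1), γ l) * ∫ ω, ((range (k + 1)).inf' nonempty_range_add_one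
      fun l => ‖gradient F (θ l ω)‖ ^ 2) ∂μ
      ≤ ∑ l ∈ range (k+1), γ l * ∫ ω, ‖gradient F (θ l ω)‖ ^ 2 ∂μ := by
    rw [Finset.sum_mul]
    exact Finset.sum_le_sum fun l hl => mul_le_mul_of_nonneg_left (hMle l hl) (hγ0 l)
  have hD : 0 < 2 * μm * ∑ l ∈ range (k+1), γ l := by
    have := hsum
    positivity
  rw [← add_div, le_div_iff₀ hD]
  nlinarith [mul_le_mul_of_nonneg_left hfin hμm.le, hmain]
end

section
/- Suppose in addition that Ĥ : Θ × 𝒵 → ℝ^d is measurable with sup_{θ∈Θ} |Ĥ_θ|_W < ∞, satisfies the Poisson equation Ĥ_θ(z) − (Π_θ Ĥ_θ)(z) = H_θ(z) − h̄(θ) for all (θ, z), and satisfies the Lipschitz bound sup_z ‖(Π_θ Ĥ_θ)(z) − (Π_{θ'} Ĥ_{θ'})(z)‖ / W(z) ≤ C_P ‖θ − θ'‖ for all θ, θ' ∈ Θ; suppose also ‖h̄(θ)‖ ≤ C₀ for all θ ∈ Θ and h̄ is L-Lipschitz on Θ. Define R_k = (Π_{θ_k} Ĥ_{θ_k})(Z^k)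 − (Π_{θ_{k+1}} Ĥ_{θ_{k+1}})(Z^{k+1}). Then the series ∑_{k≥0} γ_k ⟨h̄(θ_k), P(θ_k) R_k⟩ converges almost surely. (Control of the R_k part, via Abel transformation, in the proof of Lemma 3.) -/
open MeasureTheory ProbabilityTheory Filter Finset
open scoped RealInnerProductSpace
open scoped ENNReal

private lemma aux_op_norm {E : Type*} [NormedAddCommGroup E] [InnerProductSpace ℝ E]
    [CompleteSpace E] (P : E →L[ℝ] E) (hsa : IsSelfAdjoint P) {μM : ℝ} (hμM : 0 ≤ μM)
    (h0 : ∀ v, (0:ℝ) ≤ ⟪v, P v⟫) (hub : ∀ v, ⟪v, P v⟫ ≤ μM * ‖v‖ ^ 2) (v : E) :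
    ‖P v‖ ≤ μM * ‖v‖ := by
  have hsym := ContinuousLinearMap.isSelfAdjoint_iff_isSymmetric.mp hsa
  have hsym' : ∀ x y : E, ⟪P x, y⟫ = ⟪x, P y⟫ := fun x y => hsym x y
  have CS : ∀ x w : E, ⟪x, P w⟫ * ⟪x, P w⟫ ≤ ⟪x, P x⟫ * ⟪w, P w⟫ := by
    intro x w
    have hq : ∀ t : ℝ, 0 ≤ ⟪w, P w⟫ * (t * t) + (2 * ⟪x, P w⟫) * t + ⟪x, P x⟫ := by
      intro t
      have h := h0 (x + t • w)
      have hexp : ⟪x + t • w, P (x + t • w)⟫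
          = ⟪w, P w⟫ * (t * t) + (2 * ⟪x, P w⟫) * t + ⟪x, P x⟫ := by
        rw [map_add, P.map_smul, inner_add_left, inner_add_right, inner_add_right]
        rw [real_inner_smul_left, real_inner_smul_left, real_inner_smul_right,
          real_inner_smul_right]
        have : ⟪w, P x⟫ = ⟪x, P w⟫ := by
          rw [← hsym' w x, real_inner_comm]
        rw [this]; ring
      linarith [hexp ▸ h]
    have hd := discrim_le_zero hq
    rw [discrim] at hd
    nlinarith [hd]
  have h1 : ‖P v‖ ^ 2 = ⟪v, P (P v)⟫ := by
    rw [← hsym' v (P v), real_inner_self_eq_norm_sq]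
  have h2 := CS v (P v)
  have h3 := hub v
  have h4 := hub (P v)
  have h5 := h0 v
  have h6 := h0 (P v)
  have hnv : (0:ℝ) ≤ ‖v‖ := norm_nonneg v
  have hnPv : (0:ℝ) ≤ ‖P v‖ := norm_nonneg (P v)
  -- ‖Pv‖^4 ≤ μM^2 ‖v‖^2 ‖Pv‖^2
  have key : ‖P v‖ ^ 2 * ‖P v‖ ^ 2 ≤ (μM * ‖v‖) ^ 2 * ‖P v‖ ^ 2 := by
    have : ⟪v, P (P v)⟫ * ⟪v, P (P v)⟫ ≤ (μM * ‖v‖ ^ 2) * (μM * ‖P v‖ ^ 2) := by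
      calc ⟪v, P (P v)⟫ * ⟪v, P (P v)⟫ ≤ ⟪v, P v⟫ * ⟪P v, P (P v)⟫ := h2
        _ ≤ (μM * ‖v‖ ^ 2) * (μM * ‖P v‖ ^ 2) := by
            apply mul_le_mul h3 h4 h6 (by positivity)
    rw [h1]; nlinarith [this]
  rcases eq_or_lt_of_le hnPv with h | h
  · rw [← h]; positivity
  · have ha2 : ‖P v‖ ^ 2 ≤ (μM * ‖v‖) ^ 2 :=
      le_of_mul_le_mul_right key (pow_pos h 2)
    have := Real.sqrt_le_sqrt ha2
    rwa [Real.sqrt_sq hnPv, Real.sqrt_sq (mul_nonneg hμM hnv)] at this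

private lemma aux_abel {E : Type*} [NormedAddCommGroup E] [InnerProductSpace ℝ E]
    (c X : ℕ → E)
    (hsum : Summable fun k => ‖c (k + 1) - c k‖ * ‖X (k + 1)‖)
    (h0 : Tendsto (fun n => (⟪c n, X n⟫ : ℝ)) atTop (nhds 0)) :
    ∃ s : ℝ, Tendsto (fun n => ∑ k ∈ range n, (⟪c k, X k - X (k + 1)⟫ : ℝ))
      atTop (nhds s) := by
  have hδ : Summable fun k => (⟪c (k + 1) - c k, X (k + 1)⟫ : ℝ) := by
    refine Summable.of_norm_bounded hsum fun k => ?_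
    rw [Real.norm_eq_abs]
    exact abs_real_inner_le_norm _ _
  have hid : ∀ n, ∑ k ∈ range n, (⟪c k, X k - X (k + 1)⟫ : ℝ)
      = ⟪c 0, X 0⟫ - ⟪c n, X n⟫ + ∑ k ∈ range n, (⟪c (k + 1) - c k, X (k + 1)⟫ : ℝ) := by
    intro n
    induction n with
    | zero => simp
    | succ n ih =>
      rw [Finset.sum_range_succ, Finset.sum_range_succ, ih]
      simp only [inner_sub_left, inner_sub_right]
      ring
  refine ⟨⟪c 0, X 0⟫ - 0 + ∑' k, (⟪c (k + 1) - c k, X (k + 1)⟫ : ℝ), ?_⟩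
  have h2 : Tendsto (fun n => (⟪c 0, X 0⟫ : ℝ) - ⟪c n, X n⟫
      + ∑ k ∈ range n, (⟪c (k + 1) - c k, X (k + 1)⟫ : ℝ)) atTop
      (nhds ((⟪c 0, X 0⟫ : ℝ) - 0 + ∑' k, (⟪c (k + 1) - c k, X (k + 1)⟫ : ℝ))) :=
    (tendsto_const_nhds.sub h0).add hδ.hasSum.tendsto_sum_nat
  exact h2.congr fun n => (hid n).symm

set_option maxHeartbeats 2000000 in
/-- Control of the `R_k` part, via Abel transformation, in the proof of Lemma 3: the series
`∑_k γ_k ⟨h̄(θ_k), P(θ_k) R_k⟩` with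
`R_k = (Π_{θ_k}Ĥ_{θ_k})(Z^k) − (Π_{θ_{k+1}}Ĥ_{θ_{k+1}})(Z^{k+1})` converges almost surely. -/
theorem remainder_series_converges
    {d : ℕ} (hd : 1 ≤ d)
    {𝒵 : Type*} [MeasurableSpace 𝒵]
    (Θ : Set (EuclideanSpace ℝ (Fin d))) (hΘ : Bornology.IsBounded Θ)
    (K : EuclideanSpace ℝ (Fin d) → Kernel 𝒵 𝒵)
    (hK : ∀ θ ∈ Θ, IsMarkovKernel (K θ))
    (π : EuclideanSpace ℝ (Fin d) → Measure 𝒵)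
    (hπ : ∀ θ ∈ Θ, IsProbabilityMeasure (π θ))
    (hinv : ∀ θ ∈ Θ, (π θ).bind (K θ) = π θ)
    (H : EuclideanSpace ℝ (Fin d) → 𝒵 → EuclideanSpace ℝ (Fin d))
    (hHmeas : Measurable (Function.uncurry H))
    -- `h̄(θ) = ∫ H_θ dπ_θ`
    (hbar : EuclideanSpace ℝ (Fin d) → EuclideanSpace ℝ (Fin d))
    (hhbar : ∀ θ, hbar θ = ∫ z, H θ z ∂(π θ))
    (W : 𝒵 → ℝ) (hWmeas : Measurable W) (hW1 : ∀ z, 1 ≤ W z)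
    (p lam b : ℝ) (hp : 2 ≤ p) (hlam0 : 0 < lam) (hlam1 : lam < 1) (hb : 0 < b)
    -- `sup_θ |H_θ|_W < ∞`
    (hHbound : ∃ B : ℝ, ∀ θ ∈ Θ, ∀ z, ‖H θ z‖ ≤ B * W z)
    -- drift condition
    (hdrift : ∀ θ ∈ Θ, ∀ z,
      ∫⁻ z', ENNReal.ofReal (W z' ^ p) ∂(K θ z)
        ≤ ENNReal.ofReal (lam * W z ^ p + b))
    -- the preconditioner `P` : symmetric positive definite, eigenvalues in `[μm, μM]`
    (P : EuclideanSpace ℝ (Fin d) → (EuclideanSpace ℝ (Fin d) →L[ℝ] EuclideanSpace ℝ (Fin d)))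
    (μm μM : ℝ) (hμm : 0 < μm) (hμmM : μm ≤ μM)
    (hPsa : ∀ θ ∈ Θ, IsSelfAdjoint (P θ))
    (hPlb : ∀ θ ∈ Θ, ∀ v : EuclideanSpace ℝ (Fin d), μm * ‖v‖ ^ 2 ≤ ⟪v, P θ v⟫)
    (hPub : ∀ θ ∈ Θ, ∀ v : EuclideanSpace ℝ (Fin d), ⟪v, P θ v⟫ ≤ μM * ‖v‖ ^ 2)
    -- step sizes
    (γ : ℕ → ℝ) (hγ0 : ∀ k, 0 ≤ γ k) (hγ1 : ∀ k, γ k ≤ 1)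
    (hγsq : Summable fun k => γ k ^ 2)
    -- the algorithm
    {Ω : Type*} {m0 : MeasurableSpace Ω} {μ : Measure Ω} [IsProbabilityMeasure μ]
    (𝔉 : Filtration ℕ m0)
    (Z : ℕ → Ω → 𝒵) (hZmeas : ∀ k, Measurable[𝔉 k] (Z k))
    (θ : ℕ → Ω → EuclideanSpace ℝ (Fin d))
    (hθmeas : ∀ k, Measurable[𝔉 k] (θ k))
    (hθΘ : ∀ k ω, θ k ω ∈ Θ)
    (θ₀ : EuclideanSpace ℝ (Fin d)) (hθ0 : ∀ ω, θ 0 ω = θ₀)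
    (hZ0 : ∫⁻ ω, ENNReal.ofReal (W (Z 0 ω) ^ p) ∂μ < ⊤)
    -- the conditional law of `Z^{k+1}` given `𝔉_k` is `Π_{θ_k}(Z^k, ·)`
    (hcond : ∀ k, ∀ A : Set 𝒵, MeasurableSet A →
      (μ[fun ω => A.indicator (fun _ => (1:ℝ)) (Z (k + 1) ω) | 𝔉 k])
        =ᵐ[μ] fun ω => ((K (θ k ω)) (Z k ω) A).toReal)
    (hrec : ∀ k ω, θ (k + 1) ω = θ k ω - γ k • P (θ k ω) (H (θ k ω) (Z (k + 1) ω)))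
    -- the solution `Ĥ` of the Poisson equation
    (Hhat : EuclideanSpace ℝ (Fin d) → 𝒵 → EuclideanSpace ℝ (Fin d))
    (hHhatmeas : Measurable (Function.uncurry Hhat))
    (hHhatbound : ∃ B : ℝ, ∀ θ' ∈ Θ, ∀ z, ‖Hhat θ' z‖ ≤ B * W z)
    (hpoisson : ∀ θ' ∈ Θ, ∀ z,
      Hhat θ' z - (∫ z', Hhat θ' z' ∂(K θ' z)) = H θ' z - hbar θ')
    -- `h̄` is bounded on `Θ`
    (C₀ : ℝ) (hC₀ : 0 < C₀) (hbarbound : ∀ θ' ∈ Θ, ‖hbar θ'‖ ≤ C₀)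
    (hγvar : Summable fun k => |γ (k + 1) - γ k|)
    (MP : ℝ) (hMP : 0 < MP)
    (hPlip : ∀ θ' ∈ Θ, ∀ θ'' ∈ Θ, ‖P θ' - P θ''‖ ≤ MP * ‖θ' - θ''‖)
    -- Lipschitz regularity of `Π Ĥ`
    (CP : ℝ) (hCP : 0 < CP)
    (hPihatlip : ∀ θ' ∈ Θ, ∀ θ'' ∈ Θ, ∀ z,
      ‖(∫ z', Hhat θ' z' ∂(K θ' z)) - ∫ z', Hhat θ'' z' ∂(K θ'' z)‖
        ≤ CP * ‖θ' - θ''‖ * W z)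
    -- `h̄` is Lipschitz on `Θ`
    (L : ℝ) (hL : 0 < L)
    (hbarlip : ∀ θ' ∈ Θ, ∀ θ'' ∈ Θ, ‖hbar θ' - hbar θ''‖ ≤ L * ‖θ' - θ''‖) :
    ∀ᵐ ω ∂μ, ∃ s : ℝ, Tendsto
      (fun n => ∑ k ∈ range n,
        γ k * ⟪hbar (θ k ω),
          P (θ k ω) ((∫ z', Hhat (θ k ω) z' ∂(K (θ k ω) (Z k ω)))
            - ∫ z', Hhat (θ (k + 1) ω) z' ∂(K (θ (k + 1) ω) (Z (k + 1) ω)))⟫)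
      atTop (nhds s) := by
  classical
  obtain ⟨Bh0, hBh0⟩ := hHbound
  obtain ⟨Bhh0, hBhh0⟩ := hHhatbound
  set BH := max Bh0 0 with hBHdef
  set BHh := max Bhh0 0 with hBHhdef
  have hBH : (0:ℝ) ≤ BH := le_max_right _ _
  have hBHh : (0:ℝ) ≤ BHh := le_max_right _ _
  have hW0 : ∀ z, (0:ℝ) < W z := fun z => lt_of_lt_of_le one_pos (hW1 z)
  have hHb : ∀ θ' ∈ Θ, ∀ z, ‖H θ' z‖ ≤ BH * W z := fun θ' h z =>
    (hBh0 θ' h z).trans (mul_le_mul_of_nonneg_right (le_max_left _ _) (hW0 z).le)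
  have hHhb : ∀ θ' ∈ Θ, ∀ z, ‖Hhat θ' z‖ ≤ BHh * W z := fun θ' h z =>
    (hBhh0 θ' h z).trans (mul_le_mul_of_nonneg_right (le_max_left _ _) (hW0 z).le)
  have hp0 : (0:ℝ) < p := by linarith
  have hWp0 : ∀ z, (0:ℝ) ≤ W z ^ p := fun z => Real.rpow_nonneg (hW0 z).le p
  have hWp1 : ∀ z, (1:ℝ) ≤ W z ^ p := fun z => by
    have h := Real.rpow_le_rpow_of_exponent_le (hW1 z) (le_of_lt hp0 : (0:ℝ) ≤ p)
    rwa [Real.rpow_zero] at h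
  have hWWp : ∀ z, W z ≤ W z ^ p := fun z => by
    have h := Real.rpow_le_rpow_of_exponent_le (hW1 z) (by linarith : (1:ℝ) ≤ p)
    rwa [Real.rpow_one] at h
  have hW2Wp : ∀ z, W z * W z ≤ W z ^ p := fun z => by
    have h := Real.rpow_le_rpow_of_exponent_le (hW1 z) hp
    rw [show ((2:ℝ)) = ((2:ℕ):ℝ) by norm_num, Real.rpow_natCast, pow_two] at h
    exact h
  have hZm : ∀ j, Measurable (Z j) := fun j => (hZmeas j).mono (𝔉.le j) le_rfl
  have hKin : ∀ (k : ℕ) (ω : Ω), IsProbabilityMeasure (K (θ k ω) (Z k ω)) := fun k ω => by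
    haveI := hK _ (hθΘ k ω); infer_instance
  have hprob : ∀ θ' ∈ Θ, ∀ z : 𝒵, IsProbabilityMeasure (K θ' z) := fun θ' h z => by
    haveI := hK _ h; infer_instance
  have hfmeas : Measurable fun z => ENNReal.ofReal (W z ^ p) :=
    ENNReal.measurable_ofReal.comp
      ((Real.continuous_rpow_const hp0.le).measurable.comp hWmeas)
  -- integrability of W under the kernels
  have hWlint : ∀ θ' ∈ Θ, ∀ z, ∫⁻ z', ENNReal.ofReal (W z') ∂(K θ' z)
      ≤ ENNReal.ofReal (lam * W z ^ p + b) := fun θ' h z =>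
    le_trans (lintegral_mono fun z' => ENNReal.ofReal_le_ofReal (hWWp z')) (hdrift θ' h z)
  have hWint : ∀ θ' ∈ Θ, ∀ z, Integrable W (K θ' z) := by
    intro θ' h z
    refine ⟨hWmeas.aestronglyMeasurable, ?_⟩
    rw [hasFiniteIntegral_iff_ofReal (ae_of_all _ fun z' => (hW0 z').le)]
    exact lt_of_le_of_lt (hWlint θ' h z) ENNReal.ofReal_lt_top
  -- Jensen / Hölder : ∫ W dK ≤ (1+b)^(1/p) W z
  have hJensen : ∀ θ' ∈ Θ, ∀ z, ∫ z', W z' ∂(K θ' z) ≤ (1 + b) ^ (1/p) * W z := by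
    intro θ' hθ' z
    haveI := hprob θ' hθ' z
    have hofReal : ENNReal.ofReal (∫ z', W z' ∂(K θ' z))
        = ∫⁻ z', ENNReal.ofReal (W z') ∂(K θ' z) :=
      ofReal_integral_eq_lintegral_ofReal (hWint θ' hθ' z) (ae_of_all _ fun z' => (hW0 z').le)
    have hpq : Real.HolderConjugate p p.conjExponent :=
      Real.HolderConjugate.conjExponent (by linarith)
    have hholder := ENNReal.lintegral_mul_le_Lp_mul_Lq (K θ' z) hpq
      (f := fun z' => ENNReal.ofReal (W z')) (g := fun _ => 1)
      (ENNReal.measurable_ofReal.comp hWmeas).aemeasurable aemeasurable_const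
    simp only [Pi.mul_apply, mul_one, ENNReal.one_rpow, lintegral_one, measure_univ] at hholder
    have h2 : (∫⁻ z', ENNReal.ofReal (W z') ^ p ∂(K θ' z))
        ≤ ENNReal.ofReal ((1 + b) * W z ^ p) := by
      calc ∫⁻ z', ENNReal.ofReal (W z') ^ p ∂(K θ' z)
          = ∫⁻ z', ENNReal.ofReal (W z' ^ p) ∂(K θ' z) :=
            lintegral_congr fun z' => ENNReal.ofReal_rpow_of_nonneg (hW0 z').le hp0.le
        _ ≤ ENNReal.ofReal (lam * W z ^ p + b) := hdrift θ' hθ' z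
        _ ≤ ENNReal.ofReal ((1 + b) * W z ^ p) :=
            ENNReal.ofReal_le_ofReal (by nlinarith [hWp1 z, hWp0 z])
    have h3 : ENNReal.ofReal (∫ z', W z' ∂(K θ' z))
        ≤ ENNReal.ofReal ((1 + b) * W z ^ p) ^ (1/p) := by
      rw [hofReal]
      exact hholder.trans (ENNReal.rpow_le_rpow h2 (one_div_nonneg.mpr hp0.le))
    have e1 : (1 + b) * W z ^ p = ((1 + b) ^ (1/p) * W z) ^ p := by
      rw [Real.mul_rpow (Real.rpow_nonneg (by linarith) _) (hW0 z).le,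
        ← Real.rpow_mul (by linarith : (0:ℝ) ≤ 1 + b), one_div_mul_cancel hp0.ne',
        Real.rpow_one]
    have h4 : ENNReal.ofReal ((1 + b) * W z ^ p) ^ (1/p)
        = ENNReal.ofReal ((1 + b) ^ (1/p) * W z) := by
      rw [e1, ← ENNReal.ofReal_rpow_of_nonneg
        (mul_nonneg (Real.rpow_nonneg (by linarith) _) (hW0 z).le) hp0.le,
        ← ENNReal.rpow_mul, mul_one_div_cancel hp0.ne', ENNReal.rpow_one]
    rw [h4] at h3
    exact (ENNReal.ofReal_le_ofReal_iff
      (mul_nonneg (Real.rpow_nonneg (by linarith) _) (hW0 z).le)).mp h3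
  -- bound on X = ∫ Hhat dK
  have hXb : ∀ θ' ∈ Θ, ∀ z, ‖∫ z', Hhat θ' z' ∂(K θ' z)‖ ≤ (BHh * (1 + b) ^ (1/p)) * W z := by
    intro θ' hθ' z
    calc ‖∫ z', Hhat θ' z' ∂(K θ' z)‖ ≤ ∫ z', ‖Hhat θ' z'‖ ∂(K θ' z) :=
          norm_integral_le_integral_norm _
      _ ≤ ∫ z', BHh * W z' ∂(K θ' z) :=
          integral_mono_of_nonneg (ae_of_all _ fun z' => norm_nonneg _)
            ((hWint θ' hθ' z).const_mul BHh) (ae_of_all _ fun z' => hHhb θ' hθ' z')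
      _ = BHh * ∫ z', W z' ∂(K θ' z) := integral_const_mul _ _
      _ ≤ BHh * ((1 + b) ^ (1/p) * W z) :=
          mul_le_mul_of_nonneg_left (hJensen θ' hθ' z) hBHh
      _ = (BHh * (1 + b) ^ (1/p)) * W z := by ring
  have hμM0 : (0:ℝ) ≤ μM := le_trans hμm.le hμmM
  have hK2 : (0:ℝ) ≤ MP * C₀ + μM * L :=
    add_nonneg (mul_nonneg hMP.le hC₀.le) (mul_nonneg hμM0 hL.le)
  have hPn : ∀ θ' ∈ Θ, ∀ v, ‖P θ' v‖ ≤ μM * ‖v‖ := fun θ' h v =>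
    aux_op_norm (P θ') (hPsa θ' h) hμM0
      (fun w => le_trans (mul_nonneg hμm.le (sq_nonneg _)) (hPlb θ' h w)) (hPub θ' h) v
  -- transfer of lintegrals through the conditional law
  have key : ∀ (k : ℕ) (f : 𝒵 → ℝ≥0∞), Measurable f →
      AEMeasurable (fun ω => ∫⁻ z, f z ∂(K (θ k ω) (Z k ω))) μ ∧
      ∫⁻ ω, ∫⁻ z, f z ∂(K (θ k ω) (Z k ω)) ∂μ = ∫⁻ ω, f (Z (k + 1) ω) ∂μ := by
    intro k
    have base : ∀ A : Set 𝒵, MeasurableSet A →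
        AEMeasurable (fun ω => K (θ k ω) (Z k ω) A) μ ∧
        ∫⁻ ω, K (θ k ω) (Z k ω) A ∂μ = μ (Z (k + 1) ⁻¹' A) := by
      intro A hA
      have hcd := hcond k A hA
      have hsm : AEStronglyMeasurable (fun ω => (K (θ k ω) (Z k ω) A).toReal) μ :=
        (stronglyMeasurable_condExp.mono (𝔉.le k)).aestronglyMeasurable.congr hcd
      have hle1 : ∀ ω, K (θ k ω) (Z k ω) A ≤ 1 := fun ω => by
        haveI := hKin k ω; exact prob_le_one
      have hne : ∀ ω, K (θ k ω) (Z k ω) A ≠ ⊤ := fun ω =>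
        ne_top_of_le_ne_top ENNReal.one_ne_top (hle1 ω)
      have haem : AEMeasurable (fun ω => K (θ k ω) (Z k ω) A) μ := by
        have heq : (fun ω => K (θ k ω) (Z k ω) A)
            = fun ω => ENNReal.ofReal ((K (θ k ω) (Z k ω) A).toReal) :=
          funext fun ω => (ENNReal.ofReal_toReal (hne ω)).symm
        rw [heq]
        exact ENNReal.measurable_ofReal.comp_aemeasurable hsm.aemeasurable
      have hint : Integrable (fun ω => (K (θ k ω) (Z k ω) A).toReal) μ := by
        refine Integrable.mono' (integrable_const (1:ℝ)) hsm (ae_of_all _ fun ω => ?_)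
        rw [Real.norm_eq_abs, abs_of_nonneg ENNReal.toReal_nonneg]
        have h := ENNReal.toReal_mono ENNReal.one_ne_top (hle1 ω)
        simpa using h
      have hind : (fun ω => A.indicator (fun _ => (1:ℝ)) (Z (k + 1) ω))
          = (Z (k + 1) ⁻¹' A).indicator (fun _ => (1:ℝ)) := by
        funext ω
        by_cases h : Z (k + 1) ω ∈ A <;> simp [Set.indicator, h, Set.mem_preimage]
      refine ⟨haem, ?_⟩
      have e1 : ∫⁻ ω, K (θ k ω) (Z k ω) A ∂μ
          = ∫⁻ ω, ENNReal.ofReal ((K (θ k ω) (Z k ω) A).toReal) ∂μ :=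
        lintegral_congr fun ω => (ENNReal.ofReal_toReal (hne ω)).symm
      rw [e1, ← ofReal_integral_eq_lintegral_ofReal hint
        (ae_of_all _ fun ω => ENNReal.toReal_nonneg)]
      rw [← integral_congr_ae hcd, integral_condExp (𝔉.le k), hind,
        integral_indicator_const (1:ℝ) (hZm (k + 1) hA)]
      simp only [smul_eq_mul, mul_one]
      exact ENNReal.ofReal_toReal (measure_ne_top μ _)
    intro f hf
    refine Measurable.ennreal_induction
      (motive := fun f => AEMeasurable (fun ω => ∫⁻ z, f z ∂(K (θ k ω) (Z k ω))) μ ∧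
        ∫⁻ ω, ∫⁻ z, f z ∂(K (θ k ω) (Z k ω)) ∂μ = ∫⁻ ω, f (Z (k + 1) ω) ∂μ)
      ?_ ?_ ?_ hf
    · intro cst s hs
      have e : (fun ω => ∫⁻ z, s.indicator (fun _ => cst) z ∂(K (θ k ω) (Z k ω)))
          = fun ω => cst * K (θ k ω) (Z k ω) s :=
        funext fun ω => lintegral_indicator_const hs cst
      constructor
      · rw [e]; exact (base s hs).1.const_mul cst
      · rw [e, lintegral_const_mul'' cst (base s hs).1, (base s hs).2]
        have e2 : (fun ω => s.indicator (fun _ => cst) (Z (k + 1) ω))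
            = (Z (k + 1) ⁻¹' s).indicator (fun _ => cst) := by
          funext ω
          by_cases h : Z (k + 1) ω ∈ s <;> simp [Set.indicator, h, Set.mem_preimage]
        rw [e2, lintegral_indicator_const (hZm (k + 1) hs) cst]
    · intro f g _ hfm hgm ihf ihg
      have e : (fun ω => ∫⁻ z, (f + g) z ∂(K (θ k ω) (Z k ω)))
          = fun ω => (∫⁻ z, f z ∂(K (θ k ω) (Z k ω))) + ∫⁻ z, g z ∂(K (θ k ω) (Z k ω)) := by
        funext ω
        simp only [Pi.add_apply]
        exact lintegral_add_left hfm g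
      constructor
      · rw [e]; exact ihf.1.add ihg.1
      · rw [e, lintegral_add_left' ihf.1 _, ihf.2, ihg.2]
        have e2 : (fun ω => (f + g) (Z (k + 1) ω))
            = fun ω => f (Z (k + 1) ω) + g (Z (k + 1) ω) := by
          funext ω; simp [Pi.add_apply]
        have hfm' : Measurable fun ω => f (Z (k + 1) ω) := hfm.comp (hZm (k + 1))
        rw [e2, lintegral_add_left hfm' _]
    · intro f hfm hmono ih
      have e : (fun ω => ∫⁻ z, (⨆ n, f n z) ∂(K (θ k ω) (Z k ω)))
          = fun ω => ⨆ n, ∫⁻ z, f n z ∂(K (θ k ω) (Z k ω)) :=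
        funext fun ω => lintegral_iSup hfm hmono
      constructor
      · rw [e]; exact AEMeasurable.iSup fun n => (ih n).1
      · rw [e, lintegral_iSup' (fun n => (ih n).1)
          (ae_of_all _ fun ω n m hnm => lintegral_mono fun z => hmono hnm z)]
        calc ⨆ n, ∫⁻ ω, ∫⁻ z, f n z ∂(K (θ k ω) (Z k ω)) ∂μ
            = ⨆ n, ∫⁻ ω, f n (Z (k + 1) ω) ∂μ := iSup_congr fun n => (ih n).2
          _ = ∫⁻ ω, ⨆ n, f n (Z (k + 1) ω) ∂μ :=
            (lintegral_iSup (fun n => (hfm n).comp (hZm (k + 1)))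
              (fun n m hnm ω => hmono hnm (Z (k + 1) ω))).symm
  -- moment bounds
  have hmrec : ∀ j : ℕ, ∫⁻ ω, ENNReal.ofReal (W (Z (j + 1) ω) ^ p) ∂μ
      ≤ ENNReal.ofReal lam * ∫⁻ ω, ENNReal.ofReal (W (Z j ω) ^ p) ∂μ + ENNReal.ofReal b := by
    intro j
    rw [← (key j _ hfmeas).2]
    calc ∫⁻ ω, ∫⁻ z, ENNReal.ofReal (W z ^ p) ∂(K (θ j ω) (Z j ω)) ∂μ
        ≤ ∫⁻ ω, ENNReal.ofReal (lam * W (Z j ω) ^ p + b) ∂μ :=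
          lintegral_mono fun ω => hdrift _ (hθΘ j ω) _
      _ = ∫⁻ ω, (ENNReal.ofReal lam * ENNReal.ofReal (W (Z j ω) ^ p) + ENNReal.ofReal b) ∂μ := by
          refine lintegral_congr fun ω => ?_
          rw [ENNReal.ofReal_add (mul_nonneg hlam0.le (hWp0 _)) hb.le,
            ENNReal.ofReal_mul hlam0.le]
      _ = ENNReal.ofReal lam * ∫⁻ ω, ENNReal.ofReal (W (Z j ω) ^ p) ∂μ + ENNReal.ofReal b := by
          have hm' : Measurable fun ω => ENNReal.ofReal (W (Z j ω) ^ p) :=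
            hfmeas.comp (hZm j)
          rw [lintegral_add_left (hm'.const_mul _) _,
            lintegral_const_mul _ hm', lintegral_const, measure_univ, mul_one]
  set M : ℝ≥0∞ := (∫⁻ ω, ENNReal.ofReal (W (Z 0 ω) ^ p) ∂μ) + ENNReal.ofReal (b / (1 - lam))
    with hM
  have hMne : M ≠ ⊤ := ENNReal.add_ne_top.mpr ⟨hZ0.ne, ENNReal.ofReal_ne_top⟩
  have hmM : ∀ j : ℕ, ∫⁻ ω, ENNReal.ofReal (W (Z j ω) ^ p) ∂μ ≤ M := by
    intro j
    induction j with
    | zero => exact le_self_add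
    | succ j ih =>
      refine (hmrec j).trans ?_
      have step1 : ENNReal.ofReal lam * ∫⁻ ω, ENNReal.ofReal (W (Z j ω) ^ p) ∂μ
          + ENNReal.ofReal b ≤ ENNReal.ofReal lam * M + ENNReal.ofReal b :=
        add_le_add_left (mul_le_mul_right ih _) _
      refine step1.trans ?_
      rw [hM, mul_add, add_assoc]
      refine add_le_add ?_ (le_of_eq ?_)
      · calc ENNReal.ofReal lam * (∫⁻ ω, ENNReal.ofReal (W (Z 0 ω) ^ p) ∂μ)
            ≤ 1 * (∫⁻ ω, ENNReal.ofReal (W (Z 0 ω) ^ p) ∂μ) :=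
              mul_le_mul_left (ENNReal.ofReal_le_one.mpr hlam1.le) _
          _ = _ := one_mul _
      · rw [← ENNReal.ofReal_mul hlam0.le, ← ENNReal.ofReal_add
          (mul_nonneg hlam0.le (div_nonneg hb.le (by linarith))) hb.le]
        congr 1
        have h1 : (1:ℝ) - lam ≠ 0 := by linarith
        field_simp
        ring
  -- a.s. summability of weighted series
  have keysum : ∀ u : ℕ → ℝ, (∀ j, 0 ≤ u j) → Summable u →
      ∀ᵐ ω ∂μ, Summable fun j => u j * W (Z (j + 1) ω) ^ p := by
    intro u hu hsu
    have hWm' : ∀ j : ℕ, Measurable fun ω => ENNReal.ofReal (W (Z j ω) ^ p) :=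
      fun j => hfmeas.comp (hZm j)
    have hgm : ∀ j : ℕ, Measurable fun ω =>
        ENNReal.ofReal (u j) * ENNReal.ofReal (W (Z (j + 1) ω) ^ p) :=
      fun j => (hWm' (j + 1)).const_mul _
    have hlt : ∫⁻ ω, ∑' j, ENNReal.ofReal (u j) * ENNReal.ofReal (W (Z (j + 1) ω) ^ p) ∂μ
        ≠ ⊤ := by
      rw [lintegral_tsum fun j => (hgm j).aemeasurable]
      have hb1 : ∀ j : ℕ, ∫⁻ ω, ENNReal.ofReal (u j) * ENNReal.ofReal (W (Z (j + 1) ω) ^ p) ∂μ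
          ≤ ENNReal.ofReal (u j) * M := fun j => by
        rw [lintegral_const_mul _ (hWm' (j + 1))]
        exact mul_le_mul_right (hmM (j + 1)) _
      refine ne_top_of_le_ne_top ?_ (ENNReal.tsum_le_tsum hb1)
      rw [ENNReal.tsum_mul_right, ← ENNReal.ofReal_tsum_of_nonneg hu hsu]
      exact ENNReal.mul_ne_top ENNReal.ofReal_ne_top hMne
    have hae := ae_lt_top (Measurable.ennreal_tsum hgm) hlt
    filter_upwards [hae] with ω hω
    have hs := ENNReal.summable_toReal hω.ne
    refine hs.congr fun j => ?_
    rw [ENNReal.toReal_mul, ENNReal.toReal_ofReal (hu j), ENNReal.toReal_ofReal (hWp0 _)]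
  have ae1 := keysum (fun j => γ j ^ 2) (fun j => sq_nonneg _) hγsq
  have ae2 := keysum (fun j => |γ (j + 1) - γ j|) (fun j => abs_nonneg _) hγvar
  have ae3 := keysum (fun j => γ (j + 1) ^ 2) (fun j => sq_nonneg _)
    ((summable_nat_add_iff 1).mpr hγsq)
  filter_upwards [ae1, ae2, ae3] with ω hs1 hs2 hs3
  -- the Abel transformation, pointwise in ω
  set c : ℕ → EuclideanSpace ℝ (Fin d) := fun j => γ j • (P (θ j ω)) (hbar (θ j ω)) with hc
  set X : ℕ → EuclideanSpace ℝ (Fin d) :=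
    fun j => ∫ z', Hhat (θ j ω) z' ∂(K (θ j ω) (Z j ω)) with hX
  set CX : ℝ := BHh * (1 + b) ^ (1/p) with hCX
  have hCX0 : 0 ≤ CX := mul_nonneg hBHh (Real.rpow_nonneg (by linarith) _)
  have hXb' : ∀ j, ‖X j‖ ≤ CX * W (Z j ω) := fun j => hXb _ (hθΘ j ω) _
  have hcb : ∀ j, ‖c j‖ ≤ γ j * (μM * C₀) := by
    intro j
    simp only [hc]
    rw [norm_smul, Real.norm_eq_abs, abs_of_nonneg (hγ0 j)]
    refine mul_le_mul_of_nonneg_left ?_ (hγ0 j)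
    exact (hPn _ (hθΘ j ω) _).trans
      (mul_le_mul_of_nonneg_left (hbarbound _ (hθΘ j ω)) hμM0)
  have hΔθ : ∀ j, ‖θ (j + 1) ω - θ j ω‖ ≤ γ j * ((μM * BH) * W (Z (j + 1) ω)) := by
    intro j
    rw [hrec j ω, sub_sub_cancel_left, norm_neg, norm_smul, Real.norm_eq_abs,
      abs_of_nonneg (hγ0 j)]
    refine mul_le_mul_of_nonneg_left ?_ (hγ0 j)
    refine (hPn _ (hθΘ j ω) _).trans ?_
    rw [mul_assoc]
    exact mul_le_mul_of_nonneg_left (hHb _ (hθΘ j ω) _) hμM0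
  have hvd : ∀ j, ‖P (θ (j + 1) ω) (hbar (θ (j + 1) ω)) - P (θ j ω) (hbar (θ j ω))‖
      ≤ (MP * C₀ + μM * L) * ‖θ (j + 1) ω - θ j ω‖ := by
    intro j
    have e : P (θ (j + 1) ω) (hbar (θ (j + 1) ω)) - P (θ j ω) (hbar (θ j ω))
        = (P (θ (j + 1) ω) - P (θ j ω)) (hbar (θ (j + 1) ω))
          + P (θ j ω) (hbar (θ (j + 1) ω) - hbar (θ j ω)) := by
      rw [ContinuousLinearMap.sub_apply, map_sub]
      exact (sub_add_sub_cancel _ _ _).symm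
    rw [e]
    refine (norm_add_le _ _).trans ?_
    have t1 : ‖(P (θ (j + 1) ω) - P (θ j ω)) (hbar (θ (j + 1) ω))‖
        ≤ (MP * ‖θ (j + 1) ω - θ j ω‖) * C₀ :=
      ((P (θ (j + 1) ω) - P (θ j ω)).le_opNorm _).trans
        (mul_le_mul (hPlip _ (hθΘ (j + 1) ω) _ (hθΘ j ω)) (hbarbound _ (hθΘ (j + 1) ω))
          (norm_nonneg _) (mul_nonneg hMP.le (norm_nonneg _)))
    have t2 : ‖P (θ j ω) (hbar (θ (j + 1) ω) - hbar (θ j ω))‖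
        ≤ μM * (L * ‖θ (j + 1) ω - θ j ω‖) :=
      (hPn _ (hθΘ j ω) _).trans
        (mul_le_mul_of_nonneg_left (hbarlip _ (hθΘ (j + 1) ω) _ (hθΘ j ω)) hμM0)
    have e2 : (MP * ‖θ (j + 1) ω - θ j ω‖) * C₀ + μM * (L * ‖θ (j + 1) ω - θ j ω‖)
        = (MP * C₀ + μM * L) * ‖θ (j + 1) ω - θ j ω‖ := by ring
    linarith
  have hΔc : ∀ j, ‖c (j + 1) - c j‖ ≤ |γ (j + 1) - γ j| * (μM * C₀)
      + γ j * ((MP * C₀ + μM * L) * (γ j * ((μM * BH) * W (Z (j + 1) ω)))) := by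
    intro j
    have e : c (j + 1) - c j
        = (γ (j + 1) - γ j) • P (θ (j + 1) ω) (hbar (θ (j + 1) ω))
          + γ j • (P (θ (j + 1) ω) (hbar (θ (j + 1) ω)) - P (θ j ω) (hbar (θ j ω))) := by
      simp only [hc, sub_smul, smul_sub]
      abel
    rw [e]
    refine (norm_add_le _ _).trans (add_le_add ?_ ?_)
    · rw [norm_smul, Real.norm_eq_abs]
      exact mul_le_mul_of_nonneg_left
        ((hPn _ (hθΘ (j + 1) ω) _).trans
          (mul_le_mul_of_nonneg_left (hbarbound _ (hθΘ (j + 1) ω)) hμM0))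
        (abs_nonneg _)
    · rw [norm_smul, Real.norm_eq_abs, abs_of_nonneg (hγ0 j)]
      refine mul_le_mul_of_nonneg_left ((hvd j).trans ?_) (hγ0 j)
      exact mul_le_mul_of_nonneg_left (hΔθ j)
        (add_nonneg (mul_nonneg hMP.le hC₀.le) (mul_nonneg hμM0 hL.le))
  have habelsum : Summable fun j => ‖c (j + 1) - c j‖ * ‖X (j + 1)‖ := by
    set A1 : ℝ := (μM * C₀) * CX with hA1
    set A2 : ℝ := ((MP * C₀ + μM * L) * (μM * BH)) * CX with hA2
    have hA10 : 0 ≤ A1 := mul_nonneg (mul_nonneg hμM0 hC₀.le) hCX0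
    have hA20 : 0 ≤ A2 := mul_nonneg (mul_nonneg
      (add_nonneg (mul_nonneg hMP.le hC₀.le) (mul_nonneg hμM0 hL.le))
      (mul_nonneg hμM0 hBH)) hCX0
    refine Summable.of_nonneg_of_le
      (fun j => mul_nonneg (norm_nonneg _) (norm_nonneg _)) (fun j => ?_)
      ((hs2.mul_left A1).add (hs1.mul_left A2))
    have hw1 : (1:ℝ) ≤ W (Z (j + 1) ω) := hW1 _
    have hwp : W (Z (j + 1) ω) ≤ W (Z (j + 1) ω) ^ p := hWWp _
    have hw2p : W (Z (j + 1) ω) * W (Z (j + 1) ω) ≤ W (Z (j + 1) ω) ^ p := hW2Wp _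
    have k1 : |γ (j + 1) - γ j| * W (Z (j + 1) ω) ≤ |γ (j + 1) - γ j| * W (Z (j + 1) ω) ^ p :=
      mul_le_mul_of_nonneg_left hwp (abs_nonneg _)
    have k2 : γ j ^ 2 * (W (Z (j + 1) ω) * W (Z (j + 1) ω)) ≤ γ j ^ 2 * W (Z (j + 1) ω) ^ p :=
      mul_le_mul_of_nonneg_left hw2p (sq_nonneg _)
    calc ‖c (j + 1) - c j‖ * ‖X (j + 1)‖
        ≤ (|γ (j + 1) - γ j| * (μM * C₀)
            + γ j * ((MP * C₀ + μM * L) * (γ j * ((μM * BH) * W (Z (j + 1) ω)))))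
          * (CX * W (Z (j + 1) ω)) :=
          mul_le_mul (hΔc j) (hXb' (j + 1)) (norm_nonneg _)
            (add_nonneg (mul_nonneg (abs_nonneg _) (mul_nonneg hμM0 hC₀.le))
              (mul_nonneg (hγ0 j) (mul_nonneg hK2 (mul_nonneg (hγ0 j)
                (mul_nonneg (mul_nonneg hμM0 hBH) (hW0 _).le)))))
      _ = A1 * (|γ (j + 1) - γ j| * W (Z (j + 1) ω))
          + A2 * (γ j ^ 2 * (W (Z (j + 1) ω) * W (Z (j + 1) ω))) := by
          rw [hA1, hA2]; ring
      _ ≤ A1 * (|γ (j + 1) - γ j| * W (Z (j + 1) ω) ^ p)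
          + A2 * (γ j ^ 2 * W (Z (j + 1) ω) ^ p) :=
          add_le_add (mul_le_mul_of_nonneg_left k1 hA10) (mul_le_mul_of_nonneg_left k2 hA20)
  have hq0 : Tendsto (fun j => γ (j + 1) * W (Z (j + 1) ω)) atTop (nhds 0) := by
    have ht := hs3.tendsto_atTop_zero
    have hsq : Tendsto (fun j => Real.sqrt (γ (j + 1) ^ 2 * W (Z (j + 1) ω) ^ p))
        atTop (nhds 0) := by
      have h := (Real.continuous_sqrt.tendsto 0).comp ht
      simpa [Real.sqrt_zero, Function.comp_def] using h
    refine squeeze_zero (fun j => mul_nonneg (hγ0 _) (hW0 _).le) (fun j => ?_) hsq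
    have hle : (γ (j + 1) * W (Z (j + 1) ω)) ^ 2 ≤ γ (j + 1) ^ 2 * W (Z (j + 1) ω) ^ p := by
      have h := hW2Wp (Z (j + 1) ω)
      nlinarith [sq_nonneg (γ (j + 1))]
    calc γ (j + 1) * W (Z (j + 1) ω)
        = Real.sqrt ((γ (j + 1) * W (Z (j + 1) ω)) ^ 2) :=
          (Real.sqrt_sq (mul_nonneg (hγ0 _) (hW0 _).le)).symm
      _ ≤ _ := Real.sqrt_le_sqrt hle
  have h0 : Tendsto (fun n => (⟪c n, X n⟫ : ℝ)) atTop (nhds 0) := by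
    rw [← tendsto_add_atTop_iff_nat 1]
    refine squeeze_zero_norm
      (a := fun j => (μM * C₀ * CX) * (γ (j + 1) * W (Z (j + 1) ω))) (fun j => ?_) ?_
    · calc ‖(⟪c (j + 1), X (j + 1)⟫ : ℝ)‖ ≤ ‖c (j + 1)‖ * ‖X (j + 1)‖ := by
            rw [Real.norm_eq_abs]; exact abs_real_inner_le_norm _ _
        _ ≤ (γ (j + 1) * (μM * C₀)) * (CX * W (Z (j + 1) ω)) :=
            mul_le_mul (hcb _) (hXb' _) (norm_nonneg _)
              (mul_nonneg (hγ0 _) (mul_nonneg hμM0 hC₀.le))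
        _ = (μM * C₀ * CX) * (γ (j + 1) * W (Z (j + 1) ω)) := by ring
    · have := hq0.const_mul (μM * C₀ * CX)
      simpa using this
  obtain ⟨s, hs⟩ := aux_abel c X habelsum h0
  refine ⟨s, hs.congr fun n => Finset.sum_congr rfl fun j _ => ?_⟩
  show (⟪c j, X j - X (j + 1)⟫ : ℝ) = _
  simp only [hc]
  rw [real_inner_smul_left]
  congr 1
  exact (ContinuousLinearMap.isSelfAdjoint_iff_isSymmetric.mp
    (hPsa _ (hθΘ j ω))) (hbar (θ j ω)) (X j - X (j + 1))
end

section
/- Suppose in addition that Ĥ : Θ × 𝒵 → ℝ^d is measurable with sup_{θ∈Θ} |Ĥ_θ|_W < ∞, satisfies the Poisson equation Ĥ_θ(z) − (Π_θ Ĥ_θ)(z) = H_θ(z) − h̄(θ) for all (θ, z), and satisfies the Lipschitz bound sup_z ‖(Π_θ Ĥ_θ)(z) − (Π_{θ'} Ĥ_{θ'})(z)‖ / W(z) ≤ C_P ‖θ − θ'‖ for all θ, θ' ∈ Θ; suppose also ‖h̄(θ)‖ ≤ C₀ for all θ ∈ Θ. Define R'_k = (Π_{θ_{k+1}} Ĥ_{θ_{k+1}})(Z^{k+1})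 − (Π_{θ_k} Ĥ_{θ_k})(Z^{k+1}). Then 𝔼[∑_{k≥0} γ_k |⟨h̄(θ_k), P(θ_k) R'_k⟩|] < ∞; in particular the series ∑_{k≥0} γ_k ⟨h̄(θ_k), P(θ_k) R'_k⟩ converges absolutely almost surely. (Control of the R'_k part in the proof of Lemma 3.) -/
open MeasureTheory ProbabilityTheory Filter Finset
open scoped RealInnerProductSpace

/-- Cauchy–Schwarz for the positive bilinear form `(x, y) ↦ ⟪x, T y⟫` of a self-adjoint
positive operator. -/
lemma posform_cs {E : Type*} [NormedAddCommGroup E] [InnerProductSpace ℝ E]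
    [CompleteSpace E] (T : E →L[ℝ] E) (hT : IsSelfAdjoint T)
    (h0 : ∀ v, 0 ≤ ⟪v, T v⟫) (x y : E) :
    ⟪x, T y⟫ ^ 2 ≤ ⟪x, T x⟫ * ⟪y, T y⟫ := by
  have hsymm := ContinuousLinearMap.isSelfAdjoint_iff_isSymmetric.mp hT
  have e1 : ⟪y, T x⟫ = ⟪x, T y⟫ := by
    have h := hsymm x y
    simp only [ContinuousLinearMap.coe_coe] at h
    rw [← h, real_inner_comm]
  have key : ∀ t : ℝ, 0 ≤ ⟪y, T y⟫ * (t * t) + (2 * ⟪x, T y⟫) * t + ⟪x, T x⟫ := by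
    intro t
    have h := h0 (x + t • y)
    simp only [map_add, _root_.map_smul, inner_add_left, inner_add_right,
      real_inner_smul_left, real_inner_smul_right] at h
    rw [e1] at h
    nlinarith [h]
  have hd := discrim_le_zero key
  rw [discrim] at hd
  nlinarith [hd]

/-- A self-adjoint operator whose quadratic form lies between `0` and `μM ‖·‖²` has
operator norm at most `μM`. -/
lemma opnorm_bound {E : Type*} [NormedAddCommGroup E] [InnerProductSpace ℝ E]
    [CompleteSpace E] (T : E →L[ℝ] E) (hT : IsSelfAdjoint T) (μM : ℝ) (hμM : 0 ≤ μM)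
    (h0 : ∀ v, 0 ≤ ⟪v, T v⟫) (hub : ∀ v, ⟪v, T v⟫ ≤ μM * ‖v‖ ^ 2) (v : E) :
    ‖T v‖ ≤ μM * ‖v‖ := by
  rcases eq_or_ne (T v) 0 with h | h
  · rw [h, norm_zero]
    positivity
  · have hcs := posform_cs T hT h0 (T v) v
    have e : ⟪T v, T (T v)⟫ ≤ μM * ‖T v‖ ^ 2 := hub (T v)
    have e2 : ⟪v, T v⟫ ≤ μM * ‖v‖ ^ 2 := hub v
    have e3 : ⟪T v, T v⟫ = ‖T v‖ ^ 2 := real_inner_self_eq_norm_sq _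
    have hv : 0 < ‖T v‖ := norm_pos_iff.2 h
    have step1 : ⟪T v, T v⟫ ^ 2 ≤ (μM * ‖T v‖ ^ 2) * (μM * ‖v‖ ^ 2) :=
      hcs.trans (mul_le_mul e e2 (h0 v) (mul_nonneg hμM (sq_nonneg _)))
    rw [e3] at step1
    have step2 : ‖T v‖ ^ 2 ≤ (μM * ‖v‖) ^ 2 := by
      nlinarith [step1, mul_pos hv hv]
    exact (abs_le_of_sq_le_sq' step2 (by positivity)).2

/-- Control of the `R'_k` part in the proof of Lemma 3:
`𝔼[∑_k γ_k |⟨h̄(θ_k), P(θ_k) R'_k⟩|] < ∞` with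
`R'_k = (Π_{θ_{k+1}}Ĥ_{θ_{k+1}})(Z^{k+1}) − (Π_{θ_k}Ĥ_{θ_k})(Z^{k+1})`; in particular the
series `∑_k γ_k ⟨h̄(θ_k), P(θ_k) R'_k⟩` converges absolutely almost surely. -/
theorem remainder_prime_series_converges
    {d : ℕ} (hd : 1 ≤ d)
    {𝒵 : Type*} [MeasurableSpace 𝒵]
    (Θ : Set (EuclideanSpace ℝ (Fin d))) (hΘ : Bornology.IsBounded Θ)
    (K : EuclideanSpace ℝ (Fin d) → Kernel 𝒵 𝒵)
    (hK : ∀ θ ∈ Θ, IsMarkovKernel (K θ))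
    (π : EuclideanSpace ℝ (Fin d) → Measure 𝒵)
    (hπ : ∀ θ ∈ Θ, IsProbabilityMeasure (π θ))
    (hinv : ∀ θ ∈ Θ, (π θ).bind (K θ) = π θ)
    (H : EuclideanSpace ℝ (Fin d) → 𝒵 → EuclideanSpace ℝ (Fin d))
    (hHmeas : Measurable (Function.uncurry H))
    -- `h̄(θ) = ∫ H_θ dπ_θ`
    (hbar : EuclideanSpace ℝ (Fin d) → EuclideanSpace ℝ (Fin d))
    (hhbar : ∀ θ, hbar θ = ∫ z, H θ z ∂(π θ))
    (W : 𝒵 → ℝ) (hWmeas : Measurable W) (hW1 : ∀ z, 1 ≤ W z)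
    (p lam b : ℝ) (hp : 2 ≤ p) (hlam0 : 0 < lam) (hlam1 : lam < 1) (hb : 0 < b)
    -- `sup_θ |H_θ|_W < ∞`
    (hHbound : ∃ B : ℝ, ∀ θ ∈ Θ, ∀ z, ‖H θ z‖ ≤ B * W z)
    -- drift condition
    (hdrift : ∀ θ ∈ Θ, ∀ z,
      ∫⁻ z', ENNReal.ofReal (W z' ^ p) ∂(K θ z)
        ≤ ENNReal.ofReal (lam * W z ^ p + b))
    -- the preconditioner `P` : symmetric positive definite, eigenvalues in `[μm, μM]`
    (P : EuclideanSpace ℝ (Fin d) → (EuclideanSpace ℝ (Fin d) →L[ℝ] EuclideanSpace ℝ (Fin d)))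
    (μm μM : ℝ) (hμm : 0 < μm) (hμmM : μm ≤ μM)
    (hPsa : ∀ θ ∈ Θ, IsSelfAdjoint (P θ))
    (hPlb : ∀ θ ∈ Θ, ∀ v : EuclideanSpace ℝ (Fin d), μm * ‖v‖ ^ 2 ≤ ⟪v, P θ v⟫)
    (hPub : ∀ θ ∈ Θ, ∀ v : EuclideanSpace ℝ (Fin d), ⟪v, P θ v⟫ ≤ μM * ‖v‖ ^ 2)
    -- step sizes
    (γ : ℕ → ℝ) (hγ0 : ∀ k, 0 ≤ γ k) (hγ1 : ∀ k, γ k ≤ 1)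
    (hγsq : Summable fun k => γ k ^ 2)
    -- the algorithm
    {Ω : Type*} {m0 : MeasurableSpace Ω} {μ : Measure Ω} [IsProbabilityMeasure μ]
    (𝔉 : Filtration ℕ m0)
    (Z : ℕ → Ω → 𝒵) (hZmeas : ∀ k, Measurable[𝔉 k] (Z k))
    (θ : ℕ → Ω → EuclideanSpace ℝ (Fin d))
    (hθmeas : ∀ k, Measurable[𝔉 k] (θ k))
    (hθΘ : ∀ k ω, θ k ω ∈ Θ)
    (θ₀ : EuclideanSpace ℝ (Fin d)) (hθ0 : ∀ ω, θ 0 ω = θ₀)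
    (hZ0 : ∫⁻ ω, ENNReal.ofReal (W (Z 0 ω) ^ p) ∂μ < ⊤)
    -- the conditional law of `Z^{k+1}` given `𝔉_k` is `Π_{θ_k}(Z^k, ·)`
    (hcond : ∀ k, ∀ A : Set 𝒵, MeasurableSet A →
      (μ[fun ω => A.indicator (fun _ => (1:ℝ)) (Z (k + 1) ω) | 𝔉 k])
        =ᵐ[μ] fun ω => ((K (θ k ω)) (Z k ω) A).toReal)
    (hrec : ∀ k ω, θ (k + 1) ω = θ k ω - γ k • P (θ k ω) (H (θ k ω) (Z (k + 1) ω)))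
    -- the solution `Ĥ` of the Poisson equation
    (Hhat : EuclideanSpace ℝ (Fin d) → 𝒵 → EuclideanSpace ℝ (Fin d))
    (hHhatmeas : Measurable (Function.uncurry Hhat))
    (hHhatbound : ∃ B : ℝ, ∀ θ' ∈ Θ, ∀ z, ‖Hhat θ' z‖ ≤ B * W z)
    (hpoisson : ∀ θ' ∈ Θ, ∀ z,
      Hhat θ' z - (∫ z', Hhat θ' z' ∂(K θ' z)) = H θ' z - hbar θ')
    -- `h̄` is bounded on `Θ`
    (C₀ : ℝ) (hC₀ : 0 < C₀) (hbarbound : ∀ θ' ∈ Θ, ‖hbar θ'‖ ≤ C₀)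
    -- Lipschitz regularity of `Π Ĥ`
    (CP : ℝ) (hCP : 0 < CP)
    (hPihatlip : ∀ θ' ∈ Θ, ∀ θ'' ∈ Θ, ∀ z,
      ‖(∫ z', Hhat θ' z' ∂(K θ' z)) - ∫ z', Hhat θ'' z' ∂(K θ'' z)‖
        ≤ CP * ‖θ' - θ''‖ * W z) :
    (∫⁻ ω, (∑' k : ℕ, ENNReal.ofReal
        (γ k * |⟪hbar (θ k ω),
          P (θ k ω) ((∫ z', Hhat (θ (k + 1) ω) z' ∂(K (θ (k + 1) ω) (Z (k + 1) ω)))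
            - ∫ z', Hhat (θ k ω) z' ∂(K (θ k ω) (Z (k + 1) ω)))⟫|)) ∂μ) < ⊤ ∧
      ∀ᵐ ω ∂μ, Summable fun k : ℕ =>
        γ k * |⟪hbar (θ k ω),
          P (θ k ω) ((∫ z', Hhat (θ (k + 1) ω) z' ∂(K (θ (k + 1) ω) (Z (k + 1) ω)))
            - ∫ z', Hhat (θ k ω) z' ∂(K (θ k ω) (Z (k + 1) ω)))⟫| := by
  classical
  -- measurability of the processes w.r.t. the ambient σ-algebra
  have hZm : ∀ n, Measurable (Z n) := fun n => (hZmeas n).mono (𝔉.le n) le_rfl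
  have hWpos : ∀ z, (0:ℝ) < W z := fun z => lt_of_lt_of_le one_pos (hW1 z)
  -- operator norm bound on the preconditioner
  have hμM0 : (0:ℝ) ≤ μM := le_trans hμm.le hμmM
  have hPnorm : ∀ θ' ∈ Θ, ∀ v, ‖P θ' v‖ ≤ μM * ‖v‖ := by
    intro θ' hθ' v
    refine opnorm_bound (P θ') (hPsa θ' hθ') μM hμM0 (fun w => ?_) (hPub θ' hθ') v
    exact le_trans (by positivity) (hPlb θ' hθ' w)
  -- uniform bound on H with nonnegative constant
  obtain ⟨B, hB⟩ := hHbound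
  set B' : ℝ := max B 0 with hB'def
  have hB'0 : 0 ≤ B' := le_max_right _ _
  have hB' : ∀ θ' ∈ Θ, ∀ z, ‖H θ' z‖ ≤ B' * W z := fun θ' h z =>
    (hB θ' h z).trans (mul_le_mul_of_nonneg_right (le_max_left _ _) (hWpos z).le)
  -- the constant in the pointwise bound
  set C : ℝ := C₀ * μM ^ 2 * CP * B' with hCdef
  have hCnn : 0 ≤ C :=
    mul_nonneg (mul_nonneg (mul_nonneg hC₀.le (sq_nonneg μM)) hCP.le) hB'0
  -- pointwise bound on the summands
  have hT : ∀ (k : ℕ) (ω : Ω),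
      γ k * |⟪hbar (θ k ω),
        P (θ k ω) ((∫ z', Hhat (θ (k + 1) ω) z' ∂(K (θ (k + 1) ω) (Z (k + 1) ω)))
          - ∫ z', Hhat (θ k ω) z' ∂(K (θ k ω) (Z (k + 1) ω)))⟫|
      ≤ γ k ^ 2 * C * W (Z (k + 1) ω) ^ 2 := by
    intro k ω
    set z := Z (k + 1) ω with hz
    set R : EuclideanSpace ℝ (Fin d) :=
      (∫ z', Hhat (θ (k + 1) ω) z' ∂(K (θ (k + 1) ω) z))
        - ∫ z', Hhat (θ k ω) z' ∂(K (θ k ω) z) with hR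
    have hθk := hθΘ k ω
    have hθk1 := hθΘ (k + 1) ω
    have hWz : (0:ℝ) ≤ W z := (hWpos z).le
    have h4 : ‖θ (k + 1) ω - θ k ω‖ ≤ γ k * (μM * (B' * W z)) := by
      rw [hrec k ω, sub_sub_cancel_left, norm_neg, norm_smul, Real.norm_eq_abs,
        abs_of_nonneg (hγ0 k)]
      refine mul_le_mul_of_nonneg_left ?_ (hγ0 k)
      exact (hPnorm _ hθk _).trans (mul_le_mul_of_nonneg_left (hB' _ hθk z) hμM0)
    have h3 : ‖R‖ ≤ CP * ‖θ (k + 1) ω - θ k ω‖ * W z := hPihatlip _ hθk1 _ hθk z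
    have h6 : ‖R‖ ≤ CP * (γ k * (μM * (B' * W z))) * W z :=
      h3.trans (mul_le_mul_of_nonneg_right (mul_le_mul_of_nonneg_left h4 hCP.le) hWz)
    have h5 : |⟪hbar (θ k ω), P (θ k ω) R⟫| ≤ C₀ * (μM * ‖R‖) :=
      (abs_real_inner_le_norm _ _).trans
        (mul_le_mul (hbarbound _ hθk) (hPnorm _ hθk _) (norm_nonneg _) hC₀.le)
    have h7 : |⟪hbar (θ k ω), P (θ k ω) R⟫|
        ≤ C₀ * (μM * (CP * (γ k * (μM * (B' * W z))) * W z)) := by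
      refine h5.trans ?_
      refine mul_le_mul_of_nonneg_left (mul_le_mul_of_nonneg_left h6 hμM0) hC₀.le
    calc γ k * |⟪hbar (θ k ω), P (θ k ω) R⟫|
        ≤ γ k * (C₀ * (μM * (CP * (γ k * (μM * (B' * W z))) * W z))) :=
          mul_le_mul_of_nonneg_left h7 (hγ0 k)
      _ = γ k ^ 2 * C * W z ^ 2 := by rw [hCdef]; ring
  -- measurability of `z ↦ ofReal (W z ^ p)`
  have hWpmeas : Measurable fun z => ENNReal.ofReal (W z ^ p) := by
    have hrw : (fun z => ENNReal.ofReal (W z ^ p))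
        = fun z => ENNReal.ofReal (Real.exp (Real.log (W z) * p)) :=
      funext fun z => by rw [Real.rpow_def_of_pos (hWpos z)]
    rw [hrw]
    exact (Real.measurable_exp.comp ((Real.measurable_log.comp hWmeas).mul_const p)).ennreal_ofReal
  -- transport of lintegrals through the conditional law
  have key : ∀ (k : ℕ) (f : 𝒵 → ENNReal), Measurable f →
      ∫⁻ ω, f (Z (k + 1) ω) ∂μ
        ≤ ∫⁻ ω, ∫⁻ z', f z' ∂((K (θ k ω)) (Z k ω)) ∂μ := by
    intro k
    have base : ∀ A : Set 𝒵, MeasurableSet A →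
        ∫⁻ ω, A.indicator (fun _ => (1:ENNReal)) (Z (k + 1) ω) ∂μ
          = ∫⁻ ω, (K (θ k ω)) (Z k ω) A ∂μ := by
      intro A hA
      have hfmeas : Measurable fun ω => A.indicator (fun _ => (1:ℝ)) (Z (k + 1) ω) :=
        (measurable_const.indicator hA).comp (hZm (k + 1))
      have hfnn : ∀ ω, 0 ≤ A.indicator (fun _ => (1:ℝ)) (Z (k + 1) ω) := fun ω =>
        Set.indicator_nonneg (fun _ _ => zero_le_one) _
      have hfint : Integrable (fun ω => A.indicator (fun _ => (1:ℝ)) (Z (k + 1) ω)) μ := by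
        refine Integrable.mono' (integrable_const (1:ℝ)) hfmeas.aestronglyMeasurable
          (ae_of_all _ fun ω => ?_)
        rw [Real.norm_eq_abs, abs_of_nonneg (hfnn ω)]
        by_cases h : Z (k + 1) ω ∈ A <;> simp [h]
      have hgint : Integrable (fun ω => ((K (θ k ω)) (Z k ω) A).toReal) μ :=
        integrable_condExp.congr (hcond k A hA)
      have h1 : ∫ ω, A.indicator (fun _ => (1:ℝ)) (Z (k + 1) ω) ∂μ
          = ∫ ω, ((K (θ k ω)) (Z k ω) A).toReal ∂μ := by
        rw [← integral_condExp (𝔉.le k)]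
        exact integral_congr_ae (hcond k A hA)
      calc ∫⁻ ω, A.indicator (fun _ => (1:ENNReal)) (Z (k + 1) ω) ∂μ
          = ∫⁻ ω, ENNReal.ofReal (A.indicator (fun _ => (1:ℝ)) (Z (k + 1) ω)) ∂μ := by
            refine lintegral_congr fun ω => ?_
            by_cases h : Z (k + 1) ω ∈ A <;> simp [h]
        _ = ENNReal.ofReal (∫ ω, A.indicator (fun _ => (1:ℝ)) (Z (k + 1) ω) ∂μ) :=
            (ofReal_integral_eq_lintegral_ofReal hfint (ae_of_all _ hfnn)).symm
        _ = ENNReal.ofReal (∫ ω, ((K (θ k ω)) (Z k ω) A).toReal ∂μ) := by rw [h1]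
        _ = ∫⁻ ω, ENNReal.ofReal (((K (θ k ω)) (Z k ω) A).toReal) ∂μ :=
            ofReal_integral_eq_lintegral_ofReal hgint
              (ae_of_all _ fun ω => ENNReal.toReal_nonneg)
        _ = ∫⁻ ω, (K (θ k ω)) (Z k ω) A ∂μ := by
            refine lintegral_congr fun ω => ?_
            haveI := hK _ (hθΘ k ω)
            exact ENNReal.ofReal_toReal (measure_ne_top _ _)
    intro f hf
    refine Measurable.ennreal_induction
      (motive := fun f => ∫⁻ ω, f (Z (k + 1) ω) ∂μ
        ≤ ∫⁻ ω, ∫⁻ z', f z' ∂((K (θ k ω)) (Z k ω)) ∂μ) ?_ ?_ ?_ hf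
    · intro c A hA
      have hind : ∀ z, A.indicator (fun _ => c) z
          = c * A.indicator (fun _ => (1:ENNReal)) z := fun z => by
        by_cases h : z ∈ A <;> simp [h]
      calc ∫⁻ ω, A.indicator (fun _ => c) (Z (k + 1) ω) ∂μ
          = c * ∫⁻ ω, A.indicator (fun _ => (1:ENNReal)) (Z (k + 1) ω) ∂μ := by
            simp_rw [hind]
            exact lintegral_const_mul c ((measurable_const.indicator hA).comp (hZm (k + 1)))
        _ = c * ∫⁻ ω, (K (θ k ω)) (Z k ω) A ∂μ := by rw [base A hA]
        _ ≤ ∫⁻ ω, c * (K (θ k ω)) (Z k ω) A ∂μ := lintegral_const_mul_le _ _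
        _ = ∫⁻ ω, ∫⁻ z', A.indicator (fun _ => c) z' ∂((K (θ k ω)) (Z k ω)) ∂μ := by
            refine lintegral_congr fun ω => ?_
            rw [lintegral_indicator_const hA]
    · intro f g _ hfm hgm hPf hPg
      calc ∫⁻ ω, (f + g) (Z (k + 1) ω) ∂μ
          = (∫⁻ ω, f (Z (k + 1) ω) ∂μ) + ∫⁻ ω, g (Z (k + 1) ω) ∂μ := by
            simp only [Pi.add_apply]
            exact lintegral_add_left (hfm.comp (hZm (k + 1))) _
        _ ≤ (∫⁻ ω, ∫⁻ z', f z' ∂((K (θ k ω)) (Z k ω)) ∂μ)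
              + ∫⁻ ω, ∫⁻ z', g z' ∂((K (θ k ω)) (Z k ω)) ∂μ := add_le_add hPf hPg
        _ ≤ ∫⁻ ω, ((∫⁻ z', f z' ∂((K (θ k ω)) (Z k ω)))
              + ∫⁻ z', g z' ∂((K (θ k ω)) (Z k ω))) ∂μ := le_lintegral_add _ _
        _ = ∫⁻ ω, ∫⁻ z', (f + g) z' ∂((K (θ k ω)) (Z k ω)) ∂μ := by
            refine lintegral_congr fun ω => ?_
            simp only [Pi.add_apply]
            exact (lintegral_add_left hfm _).symm
    · intro f hfm hmono hPf
      calc ∫⁻ ω, ⨆ n, f n (Z (k + 1) ω) ∂μ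
          = ⨆ n, ∫⁻ ω, f n (Z (k + 1) ω) ∂μ :=
            lintegral_iSup (fun n => (hfm n).comp (hZm (k + 1)))
              (fun i j hij ω => hmono hij _)
        _ ≤ ⨆ n, ∫⁻ ω, ∫⁻ z', f n z' ∂((K (θ k ω)) (Z k ω)) ∂μ := iSup_mono fun n => hPf n
        _ ≤ ∫⁻ ω, ⨆ n, ∫⁻ z', f n z' ∂((K (θ k ω)) (Z k ω)) ∂μ :=
            iSup_le fun n => lintegral_mono fun ω =>
              le_iSup (fun n => ∫⁻ z', f n z' ∂((K (θ k ω)) (Z k ω))) n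
        _ = ∫⁻ ω, ∫⁻ z', ⨆ n, f n z' ∂((K (θ k ω)) (Z k ω)) ∂μ := by
            refine lintegral_congr fun ω => ?_
            exact (lintegral_iSup hfm (fun i j hij z => hmono hij z)).symm
  -- the moments `E n = 𝔼[W^p(Z^n)]`
  set E : ℕ → ENNReal := fun n => ∫⁻ ω, ENNReal.ofReal (W (Z n ω) ^ p) ∂μ with hEdef
  have hWp_nn : ∀ z, 0 ≤ W z ^ p := fun z => Real.rpow_nonneg (hWpos z).le p
  have hstep : ∀ k, E (k + 1) ≤ ENNReal.ofReal lam * E k + ENNReal.ofReal b := by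
    intro k
    refine (key k (fun z => ENNReal.ofReal (W z ^ p)) hWpmeas).trans ?_
    refine (lintegral_mono fun ω => hdrift _ (hθΘ k ω) (Z k ω)).trans (le_of_eq ?_)
    calc ∫⁻ ω, ENNReal.ofReal (lam * W (Z k ω) ^ p + b) ∂μ
        = ∫⁻ ω, (ENNReal.ofReal lam * ENNReal.ofReal (W (Z k ω) ^ p)
            + ENNReal.ofReal b) ∂μ := by
          refine lintegral_congr fun ω => ?_
          rw [ENNReal.ofReal_add (mul_nonneg hlam0.le (hWp_nn _)) hb.le,
            ENNReal.ofReal_mul hlam0.le]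
      _ = ENNReal.ofReal lam * E k + ENNReal.ofReal b := by
          rw [lintegral_add_right _ measurable_const, lintegral_const, measure_univ, mul_one]
          congr 1
          exact lintegral_const_mul _
            (show Measurable fun ω => ENNReal.ofReal (W (Z k ω) ^ p) from hWpmeas.comp (hZm k))
  set M : ENNReal := E 0 + ENNReal.ofReal (b / (1 - lam)) with hMdef
  have hMlt : M < ⊤ := ENNReal.add_lt_top.mpr ⟨hZ0, ENNReal.ofReal_lt_top⟩
  have h1l : (0:ℝ) < 1 - lam := by linarith
  have hEb : ∀ n, E n ≤ M := by
    intro n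
    induction n with
    | zero => exact le_self_add
    | succ n ih =>
      refine (hstep n).trans ?_
      calc ENNReal.ofReal lam * E n + ENNReal.ofReal b
          ≤ ENNReal.ofReal lam * (E 0 + ENNReal.ofReal (b / (1 - lam)))
            + ENNReal.ofReal b := by
            exact add_le_add_left (mul_le_mul_right ih _) _
        _ = ENNReal.ofReal lam * E 0 + (ENNReal.ofReal lam * ENNReal.ofReal (b / (1 - lam))
            + ENNReal.ofReal b) := by ring
        _ ≤ E 0 + ENNReal.ofReal (b / (1 - lam)) := by
            refine add_le_add ?_ ?_
            · have hle1 : ENNReal.ofReal lam ≤ 1 := by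
                rw [← ENNReal.ofReal_one]
                exact ENNReal.ofReal_le_ofReal hlam1.le
              calc ENNReal.ofReal lam * E 0 ≤ 1 * E 0 := mul_le_mul_left hle1 _
                _ = E 0 := one_mul _
            · rw [← ENNReal.ofReal_mul hlam0.le,
                ← ENNReal.ofReal_add (mul_nonneg hlam0.le
                  (div_nonneg hb.le h1l.le)) hb.le]
              refine le_of_eq (congrArg ENNReal.ofReal ?_)
              field_simp
              ring
  -- second moments are controlled by the `p`-th moments
  have hW2 : ∀ n, ∫⁻ ω, ENNReal.ofReal (W (Z n ω) ^ 2) ∂μ ≤ M := by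
    intro n
    refine le_trans (lintegral_mono fun ω => ENNReal.ofReal_le_ofReal ?_) (hEb n)
    have h2p : W (Z n ω) ^ (2:ℕ) = W (Z n ω) ^ ((2:ℕ):ℝ) := (Real.rpow_natCast _ 2).symm
    rw [h2p]
    exact Real.rpow_le_rpow_of_exponent_le (hW1 _) (by push_cast; exact hp)
  -- measurability of the dominating sequence
  have hgm : ∀ kk : ℕ, Measurable fun ω =>
      ENNReal.ofReal (γ kk ^ 2 * C * W (Z (kk + 1) ω) ^ 2) := fun kk =>
    (measurable_const.mul ((hWmeas.comp (hZm (kk + 1))).pow_const 2)).ennreal_ofReal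
  have hglint : ∀ kk : ℕ, ∫⁻ ω, ENNReal.ofReal (γ kk ^ 2 * C * W (Z (kk + 1) ω) ^ 2) ∂μ
      ≤ ENNReal.ofReal (γ kk ^ 2 * C) * M := by
    intro kk
    calc ∫⁻ ω, ENNReal.ofReal (γ kk ^ 2 * C * W (Z (kk + 1) ω) ^ 2) ∂μ
        = ENNReal.ofReal (γ kk ^ 2 * C)
            * ∫⁻ ω, ENNReal.ofReal (W (Z (kk + 1) ω) ^ 2) ∂μ := by
          simp_rw [ENNReal.ofReal_mul (mul_nonneg (sq_nonneg _) hCnn)]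
          exact lintegral_const_mul _
            ((hWmeas.comp (hZm (kk + 1))).pow_const 2).ennreal_ofReal
      _ ≤ ENNReal.ofReal (γ kk ^ 2 * C) * M := mul_le_mul_right (hW2 (kk + 1)) _
  have hsum_fin : (∑' kk : ℕ, ENNReal.ofReal (γ kk ^ 2 * C) * M) < ⊤ := by
    rw [ENNReal.tsum_mul_right]
    refine ENNReal.mul_lt_top ?_ ?_
    · rw [← ENNReal.ofReal_tsum_of_nonneg (fun kk => mul_nonneg (sq_nonneg _) hCnn)
        (hγsq.mul_right C)]
      exact ENNReal.ofReal_lt_top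
    · exact hMlt
  constructor
  · calc ∫⁻ ω, (∑' k : ℕ, ENNReal.ofReal
        (γ k * |⟪hbar (θ k ω),
          P (θ k ω) ((∫ z', Hhat (θ (k + 1) ω) z' ∂(K (θ (k + 1) ω) (Z (k + 1) ω)))
            - ∫ z', Hhat (θ k ω) z' ∂(K (θ k ω) (Z (k + 1) ω)))⟫|)) ∂μ
        ≤ ∫⁻ ω, (∑' k : ℕ, ENNReal.ofReal (γ k ^ 2 * C * W (Z (k + 1) ω) ^ 2)) ∂μ :=
          lintegral_mono fun ω => ENNReal.tsum_le_tsum fun kk =>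
            ENNReal.ofReal_le_ofReal (hT kk ω)
      _ = ∑' kk : ℕ, ∫⁻ ω, ENNReal.ofReal (γ kk ^ 2 * C * W (Z (kk + 1) ω) ^ 2) ∂μ :=
          lintegral_tsum fun kk => (hgm kk).aemeasurable
      _ ≤ ∑' kk : ℕ, ENNReal.ofReal (γ kk ^ 2 * C) * M := ENNReal.tsum_le_tsum hglint
      _ < ⊤ := hsum_fin
  · have hGmeas : Measurable fun ω =>
        ∑' kk : ℕ, ENNReal.ofReal (γ kk ^ 2 * C * W (Z (kk + 1) ω) ^ 2) :=
      Measurable.ennreal_tsum hgm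
    have hfin : ∀ᵐ ω ∂μ,
        (∑' kk : ℕ, ENNReal.ofReal (γ kk ^ 2 * C * W (Z (kk + 1) ω) ^ 2)) < ⊤ := by
      refine ae_lt_top hGmeas ?_
      rw [lintegral_tsum fun kk => (hgm kk).aemeasurable]
      exact ((ENNReal.tsum_le_tsum hglint).trans_lt hsum_fin).ne
    filter_upwards [hfin] with ω hω
    have hsummg : Summable fun kk : ℕ => γ kk ^ 2 * C * W (Z (kk + 1) ω) ^ 2 := by
      have h := ENNReal.summable_toReal hω.ne
      refine h.congr fun kk => ENNReal.toReal_ofReal ?_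
      exact mul_nonneg (mul_nonneg (sq_nonneg _) hCnn) (sq_nonneg _)
    exact Summable.of_nonneg_of_le (fun kk => mul_nonneg (hγ0 kk) (abs_nonneg _))
      (fun kk => hT kk ω) hsummg
end
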